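/- arXiv:2505.08563 — 7 statements merged into one kernel-verified Lean document; each statement's English description precedes it below -/
import Mathlib

section
/- Let x̄₀ ∈ ℝ, η > 0 and c > 0. Let u¹, u² ∈ L¹(ℝ) be nonnegative functions with u^i(x) ≥ c for almost every x ∈ [x̄₀ − η, x̄₀ + η] (i = 1, 2), and let x̄₁, x̄₂ ∈ [x̄₀ − η, x̄₀ + η] satisfy ∫_{x̄_i}^∞ u^i(y) dy = 1 for i = 1, 2. Then c · |x̄₁ − x̄₂| ≤ ‖u² − u¹‖_{L¹(ℝ)}. -/
open MeasureTheory Set Filter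

noncomputable section

lemma threshold_aux
    (xbar η c : ℝ) (hc : 0 < c)
    (u₁ u₂ : ℝ → ℝ) (h₁ : Integrable u₁) (h₂ : Integrable u₂)
    (hl₁ : ∀ᵐ (x : ℝ) ∂volume, x ∈ Icc (xbar - η) (xbar + η) → c ≤ u₁ x)
    (x₁ x₂ : ℝ) (hx₁ : x₁ ∈ Icc (xbar - η) (xbar + η))
    (hx₂ : x₂ ∈ Icc (xbar - η) (xbar + η)) (hle : x₁ ≤ x₂)
    (ht₁ : (∫ y in Ioi x₁, u₁ y) = 1) (ht₂ : (∫ y in Ioi x₂, u₂ y) = 1) :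
    c * (x₂ - x₁) ≤ ∫ x : ℝ, |u₂ x - u₁ x| := by
  have hIcc : Ioc x₁ x₂ ⊆ Icc (xbar - η) (xbar + η) := fun x hx =>
    ⟨le_trans hx₁.1 hx.1.le, le_trans hx.2 hx₂.2⟩
  -- step 1 : c * (x₂ - x₁) ≤ ∫ in Ioc x₁ x₂, u₁
  have step1 : c * (x₂ - x₁) ≤ ∫ x in Ioc x₁ x₂, u₁ x := by
    have : ∫ _x in Ioc x₁ x₂, c = c * (x₂ - x₁) := by
      simp [Real.volume_Ioc, ENNReal.toReal_ofReal (sub_nonneg.2 hle), mul_comm, hle]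
    rw [← this]
    refine setIntegral_mono_ae_restrict (integrableOn_const measure_Ioc_lt_top.ne) h₁.integrableOn ?_
    filter_upwards [ae_restrict_of_ae hl₁, ae_restrict_mem measurableSet_Ioc] with x hx hmem
    exact hx (hIcc hmem)
  -- step 2 : split Ioi x₁
  have hsplit : (∫ x in Ioc x₁ x₂, u₁ x) + ∫ x in Ioi x₂, u₁ x = ∫ x in Ioi x₁, u₁ x := by
    rw [← setIntegral_union (Ioc_disjoint_Ioi le_rfl) measurableSet_Ioi
      h₁.integrableOn h₁.integrableOn, Ioc_union_Ioi_eq_Ioi hle]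
  have step2 : (∫ x in Ioc x₁ x₂, u₁ x) = (∫ x in Ioi x₂, u₂ x) - ∫ x in Ioi x₂, u₁ x := by
    rw [ht₂]; linarith [hsplit, ht₁]
  -- step 3
  have step3 : (∫ x in Ioi x₂, u₂ x) - (∫ x in Ioi x₂, u₁ x) ≤ ∫ x : ℝ, |u₂ x - u₁ x| := by
    rw [← integral_sub h₂.integrableOn h₁.integrableOn]
    calc (∫ x in Ioi x₂, (u₂ x - u₁ x)) ≤ ∫ x in Ioi x₂, |u₂ x - u₁ x| :=
          integral_mono_ae (h₂.sub h₁).integrableOn ((h₂.sub h₁).abs).integrableOn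
            (Eventually.of_forall fun x => le_abs_self _)
      _ ≤ ∫ x : ℝ, |u₂ x - u₁ x| := by
          refine setIntegral_le_integral ((h₂.sub h₁).abs) ?_
          exact Eventually.of_forall fun x => abs_nonneg _
  linarith

/-- If two nonnegative integrable functions are bounded below by
`c > 0` on `[x̄₀−η, x̄₀+η]`, and `x̄₁, x̄₂` in this interval are thresholds where the
respective tail integrals equal `1`, then `c·|x̄₁ − x̄₂| ≤ ‖u² − u¹‖_{L¹}`. -/
theorem threshold_distance_le_L1
    (xbar η c : ℝ) (hη : 0 < η) (hc : 0 < c)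
    (u₁ u₂ : ℝ → ℝ) (h₁ : Integrable u₁) (h₂ : Integrable u₂)
    (hp₁ : ∀ᵐ (x : ℝ) ∂volume, 0 ≤ u₁ x)
    (hp₂ : ∀ᵐ (x : ℝ) ∂volume, 0 ≤ u₂ x)
    (hl₁ : ∀ᵐ (x : ℝ) ∂volume, x ∈ Icc (xbar - η) (xbar + η) → c ≤ u₁ x)
    (hl₂ : ∀ᵐ (x : ℝ) ∂volume, x ∈ Icc (xbar - η) (xbar + η) → c ≤ u₂ x)
    (x₁ x₂ : ℝ) (hx₁ : x₁ ∈ Icc (xbar - η) (xbar + η))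
    (hx₂ : x₂ ∈ Icc (xbar - η) (xbar + η))
    (ht₁ : (∫ y in Ioi x₁, u₁ y) = 1) (ht₂ : (∫ y in Ioi x₂, u₂ y) = 1) :
    c * |x₁ - x₂| ≤ ∫ x : ℝ, |u₂ x - u₁ x| := by
  rcases le_total x₁ x₂ with hle | hle
  · rw [abs_sub_comm, abs_of_nonneg (sub_nonneg.2 hle)]
    exact threshold_aux xbar η c hc u₁ u₂ h₁ h₂ hl₁ x₁ x₂ hx₁ hx₂ hle ht₁ ht₂
  · rw [abs_of_nonneg (sub_nonneg.2 hle)]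
    have := threshold_aux xbar η c hc u₂ u₁ h₂ h₁ hl₂ x₂ x₁ hx₂ hx₁ hle ht₂ ht₁
    simpa [abs_sub_comm] using this
end
end

section
/- Let u¹, u² ∈ L¹(ℝ) ∩ L^∞(ℝ) be nonnegative, set F^i(x) := ∫_x^∞ u^i(y) dy, and suppose there exist x̄₁, x̄₂ ∈ ℝ such that { x ∈ ℝ : F^i(x) > 1 } = (−∞, x̄_i) for i = 1, 2. Then ‖ã(F¹) u¹ − ã(F²) u²‖_{L¹(ℝ)} ≤ |x̄₁ − x̄₂| · ‖u¹‖_{L^∞(ℝ)} + ‖u¹ − u²‖_{L¹(ℝ)}, and likewise ‖b̃(F¹) u¹ − b̃(F²) u²‖_{L¹(ℝ)} ≤ |x̄₁ − x̄₂| · ‖u¹‖_{L^∞(ℝ)} + ‖u¹ − u²‖_{L¹(ℝ)}. -/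
open MeasureTheory Set Filter

noncomputable section

lemma aux_bound (u₁ u₂ : ℝ → ℝ) (h₁ : Integrable u₁) (h₂ : Integrable u₂)
    (C : ℝ) (hC : ∀ᵐ (x : ℝ) ∂volume, |u₁ x| ≤ C) (x₁ x₂ : ℝ)
    (e₁ e₂ : ℝ → ℝ) (hm₁ : Measurable e₁) (hm₂ : Measurable e₂)
    (hb1 : ∀ x, e₁ x = 0 ∨ e₁ x = 1) (hb2 : ∀ x, e₂ x = 0 ∨ e₂ x = 1)
    (heq : ∀ x, x ∉ Ico (min x₁ x₂) (max x₁ x₂) → e₁ x = e₂ x) :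
    (∫ x : ℝ, |e₁ x * u₁ x - e₂ x * u₂ x|)
      ≤ |x₁ - x₂| * C + ∫ x : ℝ, |u₁ x - u₂ x| := by
  set S : Set ℝ := Ico (min x₁ x₂) (max x₁ x₂) with hS
  have hSm : MeasurableSet S := measurableSet_Ico
  have hint1 : Integrable (fun x => e₁ x * u₁ x) :=
    h₁.bdd_mul (c := 1) hm₁.aestronglyMeasurable (ae_of_all _ fun x => by rcases hb1 x with h | h <;> simp [h])
  have hint2 : Integrable (fun x => e₂ x * u₂ x) :=
    h₂.bdd_mul (c := 1) hm₂.aestronglyMeasurable (ae_of_all _ fun x => by rcases hb2 x with h | h <;> simp [h])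
  have hintL : Integrable (fun x => |e₁ x * u₁ x - e₂ x * u₂ x|) := (hint1.sub hint2).abs
  have hint3 : Integrable (fun x => |u₁ x - u₂ x|) := (h₁.sub h₂).abs
  have hintR : Integrable (fun x => S.indicator (fun y => |u₁ y|) x + |u₁ x - u₂ x|) :=
    (h₁.abs.indicator hSm).add hint3
  have hpt : ∀ x, |e₁ x * u₁ x - e₂ x * u₂ x|
      ≤ S.indicator (fun y => |u₁ y|) x + |u₁ x - u₂ x| := by
    intro x
    have key : e₁ x * u₁ x - e₂ x * u₂ x = (e₁ x - e₂ x) * u₁ x + e₂ x * (u₁ x - u₂ x) := by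
      ring
    rw [key]
    refine (abs_add_le _ _).trans (add_le_add ?_ ?_)
    · rw [abs_mul]
      by_cases hx : x ∈ S
      · rw [Set.indicator_of_mem hx]
        have : |e₁ x - e₂ x| ≤ 1 := by
          rcases hb1 x with h | h <;> rcases hb2 x with h' | h' <;> simp [h, h']
        calc |e₁ x - e₂ x| * |u₁ x| ≤ 1 * |u₁ x| := by gcongr
          _ = |u₁ x| := one_mul _
      · rw [Set.indicator_of_notMem hx, heq x hx]
        simp
    · rw [abs_mul]
      have : |e₂ x| ≤ 1 := by rcases hb2 x with h | h <;> simp [h]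
      calc |e₂ x| * |u₁ x - u₂ x| ≤ 1 * |u₁ x - u₂ x| := by gcongr
        _ = _ := one_mul _
  have hmono := integral_mono hintL hintR hpt
  rw [integral_add (h₁.abs.indicator hSm) hint3] at hmono
  refine hmono.trans ?_
  gcongr
  rw [integral_indicator hSm]
  have hCS : ∀ᵐ x ∂(volume.restrict S), |u₁ x| ≤ C := ae_restrict_of_ae hC
  have hSfin : volume S < ⊤ := by
    rw [hS, Real.volume_Ico]; exact ENNReal.ofReal_lt_top
  have h1 : (∫ x in S, |u₁ x|) ≤ ∫ x in S, C :=
    integral_mono_ae h₁.abs.integrableOn (integrableOn_const hSfin.ne) hCS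
  refine h1.trans ?_
  rw [setIntegral_const, hS, Real.volume_real_Ico_of_le (by
    have := min_le_max (a := x₁) (b := x₂); linarith), smul_eq_mul, max_sub_min_eq_abs, abs_sub_comm]


/-- `ã(z) = 𝟙{z > 1}`. -/
def ta (z : ℝ) : ℝ := if 1 < z then 1 else 0

/-- `b̃(z) = 1 - ã(z) = 𝟙{z ≤ 1}`. -/
def tb (z : ℝ) : ℝ := 1 - ta z

/-- For nonnegative `u¹, u² ∈ L¹ ∩ L^∞` with tail functions
`Fⁱ(x) = ∫_x^∞ uⁱ` whose super-level sets `{Fⁱ > 1}` equal `(−∞, x̄ᵢ)`,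
‖ã(F¹)u¹ − ã(F²)u²‖₁ ≤ |x̄₁ − x̄₂|·‖u¹‖_∞ + ‖u¹ − u²‖₁, and likewise for `b̃`. -/
theorem advect_birth_L1_bound
    (u₁ u₂ : ℝ → ℝ) (h₁ : Integrable u₁) (h₂ : Integrable u₂)
    (hb₂ : ∃ M : ℝ, ∀ᵐ (x : ℝ) ∂volume, |u₂ x| ≤ M)
    (hp₁ : ∀ᵐ (x : ℝ) ∂volume, 0 ≤ u₁ x)
    (hp₂ : ∀ᵐ (x : ℝ) ∂volume, 0 ≤ u₂ x)
    (x₁ x₂ : ℝ)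
    (hs₁ : {x : ℝ | 1 < ∫ y in Ioi x, u₁ y} = Iio x₁)
    (hs₂ : {x : ℝ | 1 < ∫ y in Ioi x, u₂ y} = Iio x₂)
    (C : ℝ) (hC : ∀ᵐ (x : ℝ) ∂volume, |u₁ x| ≤ C) :
    ((∫ x : ℝ, |ta (∫ y in Ioi x, u₁ y) * u₁ x - ta (∫ y in Ioi x, u₂ y) * u₂ x|)
        ≤ |x₁ - x₂| * C + ∫ x : ℝ, |u₁ x - u₂ x|) ∧
    ((∫ x : ℝ, |tb (∫ y in Ioi x, u₁ y) * u₁ x - tb (∫ y in Ioi x, u₂ y) * u₂ x|)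
        ≤ |x₁ - x₂| * C + ∫ x : ℝ, |u₁ x - u₂ x|) := by
  have mem₁ : ∀ x : ℝ, (1 < ∫ y in Ioi x, u₁ y) ↔ x < x₁ := fun x => Set.ext_iff.mp hs₁ x
  have mem₂ : ∀ x : ℝ, (1 < ∫ y in Ioi x, u₂ y) ↔ x < x₂ := fun x => Set.ext_iff.mp hs₂ x
  set e₁ : ℝ → ℝ := fun x => if x < x₁ then 1 else 0 with he₁
  set e₂ : ℝ → ℝ := fun x => if x < x₂ then 1 else 0 with he₂
  set f₁ : ℝ → ℝ := fun x => if x < x₁ then 0 else 1 with hf₁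
  set f₂ : ℝ → ℝ := fun x => if x < x₂ then 0 else 1 with hf₂
  have hme₁ : Measurable e₁ := Measurable.ite measurableSet_Iio measurable_const measurable_const
  have hme₂ : Measurable e₂ := Measurable.ite measurableSet_Iio measurable_const measurable_const
  have hmf₁ : Measurable f₁ := Measurable.ite measurableSet_Iio measurable_const measurable_const
  have hmf₂ : Measurable f₂ := Measurable.ite measurableSet_Iio measurable_const measurable_const
  have hbe₁ : ∀ x, e₁ x = 0 ∨ e₁ x = 1 := fun x => by by_cases h : x < x₁ <;> simp [he₁, h]
  have hbe₂ : ∀ x, e₂ x = 0 ∨ e₂ x = 1 := fun x => by by_cases h : x < x₂ <;> simp [he₂, h]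
  have hbf₁ : ∀ x, f₁ x = 0 ∨ f₁ x = 1 := fun x => by by_cases h : x < x₁ <;> simp [hf₁, h]
  have hbf₂ : ∀ x, f₂ x = 0 ∨ f₂ x = 1 := fun x => by by_cases h : x < x₂ <;> simp [hf₂, h]
  have hout : ∀ x ∉ Ico (min x₁ x₂) (max x₁ x₂), (x < x₁ ↔ x < x₂) := by
    intro x hx
    simp only [mem_Ico, not_and_or, not_le, not_lt] at hx
    rcases hx with h | h
    · rw [lt_min_iff] at h; simp [h.1, h.2]
    · rw [max_le_iff] at h; simp [not_lt.mpr h.1, not_lt.mpr h.2]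
  have heqe : ∀ x ∉ Ico (min x₁ x₂) (max x₁ x₂), e₁ x = e₂ x := by
    intro x hx; simp only [he₁, he₂]
    by_cases h : x < x₁
    · rw [if_pos h, if_pos ((hout x hx).mp h)]
    · rw [if_neg h, if_neg (fun h2 => h ((hout x hx).mpr h2))]
  have heqf : ∀ x ∉ Ico (min x₁ x₂) (max x₁ x₂), f₁ x = f₂ x := by
    intro x hx; simp only [hf₁, hf₂]
    by_cases h : x < x₁
    · rw [if_pos h, if_pos ((hout x hx).mp h)]
    · rw [if_neg h, if_neg (fun h2 => h ((hout x hx).mpr h2))]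
  have hta₁ : ∀ x : ℝ, ta (∫ y in Ioi x, u₁ y) = e₁ x := by
    intro x; simp only [ta, he₁, mem₁ x]
  have hta₂ : ∀ x : ℝ, ta (∫ y in Ioi x, u₂ y) = e₂ x := by
    intro x; simp only [ta, he₂, mem₂ x]
  have htb₁ : ∀ x : ℝ, tb (∫ y in Ioi x, u₁ y) = f₁ x := by
    intro x; simp only [tb, hta₁ x, he₁, hf₁]; by_cases h : x < x₁ <;> simp [h]
  have htb₂ : ∀ x : ℝ, tb (∫ y in Ioi x, u₂ y) = f₂ x := by
    intro x; simp only [tb, hta₂ x, he₂, hf₂]; by_cases h : x < x₂ <;> simp [h]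
  constructor
  · have : (fun x : ℝ => |ta (∫ y in Ioi x, u₁ y) * u₁ x - ta (∫ y in Ioi x, u₂ y) * u₂ x|)
        = fun x => |e₁ x * u₁ x - e₂ x * u₂ x| := by
      funext x; rw [hta₁ x, hta₂ x]
    rw [this]
    exact aux_bound u₁ u₂ h₁ h₂ C hC x₁ x₂ e₁ e₂ hme₁ hme₂ hbe₁ hbe₂ heqe
  · have : (fun x : ℝ => |tb (∫ y in Ioi x, u₁ y) * u₁ x - tb (∫ y in Ioi x, u₂ y) * u₂ x|)
        = fun x => |f₁ x * u₁ x - f₂ x * u₂ x| := by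
      funext x; rw [htb₁ x, htb₂ x]
    rw [this]
    exact aux_bound u₁ u₂ h₁ h₂ C hC x₁ x₂ f₁ f₂ hmf₁ hmf₂ hbf₁ hbf₂ heqf
end
end

section
/- Let N ≥ 1 and K ≥ 1 be integers, let x₁ > x₂ > … > x_N be real numbers, let ψ : ℝ → ℝ be continuous with compact support, and set Ψ(x) := ∫_{−∞}^x ψ(y) dy. For x ∈ ℝ set F(x) := (1/K) · #{ i ∈ {1,…,N} : x_i ≥ x } and A(z) := max(z − 1, 0). Then (1/K) ∑_{i=1}^N Ψ(x_i) · 𝟙{i > K} = ∫_ℝ ψ(x) A(F(x)) dx. -/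
open MeasureTheory Set Filter

noncomputable section

/-- `A(z) = max(z - 1, 0)`, the antiderivative of `ã(z) = 𝟙{z > 1}`. -/
def Afun (z : ℝ) : ℝ := max (z - 1) 0

/-- `B(z) = min(z, 1)`, the antiderivative of `b̃(z) = 𝟙{z ≤ 1}`. -/
def Bfun (z : ℝ) : ℝ := min z 1

open scoped Classical

/-- **discrete integration by parts, drift term.** For strictly decreasing
positions `x₁ > … > x_N`, `Ψ(x) = ∫_{−∞}^x ψ`, and the empirical tail function
`F(z) = (1/K)·#{i : xᵢ ≥ z}`:
`(1/K) ∑_{i=1}^N Ψ(xᵢ)·𝟙{i > K} = ∫ ψ(z) A(F(z)) dz`. -/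
theorem discrete_ibp_drift
    (N K : ℕ) (hN : 1 ≤ N) (hK : 1 ≤ K) (x : ℕ → ℝ)
    (hdec : ∀ i j, 1 ≤ i → i < j → j ≤ N → x j < x i)
    (ψ : ℝ → ℝ) (hψc : Continuous ψ) (hψs : HasCompactSupport ψ) :
    (1 / (K:ℝ)) * ∑ i ∈ Finset.Icc 1 N,
        (∫ y in Iic (x i), ψ y) * (if K < i then (1:ℝ) else 0)
      = ∫ z : ℝ, ψ z * Afun ((((Finset.Icc 1 N).filter fun i => z ≤ x i).card : ℝ) / K) := by
  have hKpos : (0:ℝ) < K := by exact_mod_cast hK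
  have hint : Integrable ψ := hψc.integrable_of_hasCompactSupport hψs
  set c : ℝ → ℕ := fun z => ((Finset.Icc 1 N).filter fun i => z ≤ x i).card with hc
  have hcN : ∀ z, c z ≤ N := by
    intro z
    calc c z ≤ (Finset.Icc 1 N).card := Finset.card_filter_le _ _
    _ = N := by simp [Nat.card_Icc]
  have hmem : ∀ z : ℝ, ∀ i ∈ Finset.Icc 1 N, (z ≤ x i ↔ i ≤ c z) := by
    intro z i hi
    simp only [Finset.mem_Icc] at hi
    constructor
    · intro hz
      have hsub : Finset.Icc 1 i ⊆ (Finset.Icc 1 N).filter fun j => z ≤ x j := by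
        intro j hj
        simp only [Finset.mem_Icc] at hj
        simp only [Finset.mem_filter, Finset.mem_Icc]
        refine ⟨⟨hj.1, hj.2.trans hi.2⟩, ?_⟩
        rcases eq_or_lt_of_le hj.2 with h | h
        · rw [h]; exact hz
        · exact hz.trans (hdec j i hj.1 h hi.2).le
      have h2 := Finset.card_le_card hsub
      simp only [Nat.card_Icc] at h2
      simp only [hc]
      omega
    · intro hle
      by_contra hz
      push_neg at hz
      have hsub : ((Finset.Icc 1 N).filter fun j => z ≤ x j) ⊆ Finset.Icc 1 (i-1) := by
        intro j hj
        simp only [Finset.mem_filter, Finset.mem_Icc] at hj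
        refine Finset.mem_Icc.mpr ⟨hj.1.1, ?_⟩
        by_contra hji
        push_neg at hji
        have hij : i ≤ j := by omega
        have hxle : x j ≤ x i := by
          rcases eq_or_lt_of_le hij with h | h
          · rw [h]
          · exact (hdec i j hi.1 h hj.1.2).le
        exact absurd (hj.2.trans hxle) (not_le.mpr hz)
      have h2 := Finset.card_le_card hsub
      simp only [Nat.card_Icc] at h2
      have : c z ≤ i - 1 := by simp only [hc]; omega
      omega
  have hpt : ∀ z : ℝ, ψ z * Afun ((c z : ℝ) / K)
      = ∑ i ∈ Finset.Icc 1 N, (1/(K:ℝ)) * (if K < i then (Iic (x i)).indicator ψ z else 0) := by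
    intro z
    have hterm : ∀ i ∈ Finset.Icc 1 N,
        (1/(K:ℝ)) * (if K < i then (Iic (x i)).indicator ψ z else 0)
        = ψ z * ((1/(K:ℝ)) * (if K < i ∧ i ≤ c z then 1 else 0)) := by
      intro i hi
      by_cases h1 : K < i
      · simp only [h1, if_true, true_and, Set.indicator_apply, mem_Iic]
        by_cases h2 : z ≤ x i
        · rw [if_pos h2, if_pos ((hmem z i hi).mp h2)]; ring
        · rw [if_neg h2, if_neg (fun hc' => h2 ((hmem z i hi).mpr hc'))]; ring
      · simp [h1]
    rw [Finset.sum_congr rfl hterm, ← Finset.mul_sum, ← Finset.mul_sum]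
    congr 1
    have hcount : ∑ i ∈ Finset.Icc 1 N, (if K < i ∧ i ≤ c z then (1:ℝ) else 0)
        = ((Finset.Icc (K+1) (c z)).card : ℝ) := by
      rw [Finset.sum_boole]
      congr 2
      ext i
      simp only [Finset.mem_filter, Finset.mem_Icc]
      constructor
      · rintro ⟨⟨h1, h2⟩, h3, h4⟩; omega
      · intro ⟨h1, h2⟩
        have := hcN z
        omega
    rw [hcount]
    simp only [Nat.card_Icc, Afun]
    rcases le_or_gt K (c z) with h | h
    · have hcast : ((c z + 1 - (K+1) : ℕ) : ℝ) = (c z : ℝ) - K := by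
        rw [Nat.cast_sub (by omega : K + 1 ≤ c z + 1)]
        push_cast; ring
      rw [hcast, max_eq_left (by rw [sub_nonneg, le_div_iff₀ hKpos, one_mul]; exact_mod_cast h)]
      field_simp
    · have h0 : c z + 1 - (K+1) = 0 := by omega
      rw [h0]
      have : (c z : ℝ) / K - 1 ≤ 0 := by
        rw [sub_nonpos, div_le_one hKpos]
        exact_mod_cast h.le
      simp [max_eq_right this]
  have hintterm : ∀ i ∈ Finset.Icc 1 N,
      Integrable (fun z => (1/(K:ℝ)) * (if K < i then (Iic (x i)).indicator ψ z else 0)) := by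
    intro i _
    by_cases h : K < i
    · simp only [h, if_true]
      exact (hint.indicator measurableSet_Iic).const_mul _
    · simp [h]
  calc (1 / (K:ℝ)) * ∑ i ∈ Finset.Icc 1 N,
        (∫ y in Iic (x i), ψ y) * (if K < i then (1:ℝ) else 0)
      = ∑ i ∈ Finset.Icc 1 N,
        ∫ z, (1/(K:ℝ)) * (if K < i then (Iic (x i)).indicator ψ z else 0) := by
        rw [Finset.mul_sum]
        refine Finset.sum_congr rfl fun i _ => ?_
        rw [integral_const_mul]
        by_cases h : K < i
        · simp only [h, if_true, mul_one]
          rw [integral_indicator measurableSet_Iic]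
        · simp [h]
    _ = ∫ z, ∑ i ∈ Finset.Icc 1 N,
          (1/(K:ℝ)) * (if K < i then (Iic (x i)).indicator ψ z else 0) :=
        (integral_finset_sum _ hintterm).symm
    _ = ∫ z : ℝ, ψ z * Afun ((c z : ℝ) / K) := by
        exact integral_congr_ae (Filter.Eventually.of_forall fun z => (hpt z).symm)
end
end

section
/- Let N ≥ 1 and K ≥ 1 be integers, let x₁ > x₂ > … > x_N be real numbers, let ψ : ℝ → ℝ be continuous with compact support, and set Ψ(x) := ∫_{−∞}^x ψ(y) dy. For x ∈ ℝ set F(x) := (1/K) · #{ i ∈ {1,…,N} : x_i ≥ x } and B(z) := min(z, 1). Then (1/K) ∑_{i=1}^N Ψ(x_i) · 𝟙{i ≤ K} = ∫_ℝ ψ(x) B(F(x)) dx. -/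
open MeasureTheory Set Filter

noncomputable section

open scoped Classical

/-- **discrete integration by parts, branching term.** For strictly
decreasing positions `x₁ > … > x_N`, `Ψ(x) = ∫_{−∞}^x ψ`, and the empirical tail
function `F(z) = (1/K)·#{i : xᵢ ≥ z}`:
`(1/K) ∑_{i=1}^N Ψ(xᵢ)·𝟙{i ≤ K} = ∫ ψ(z) B(F(z)) dz`. -/
theorem discrete_ibp_branching
    (N K : ℕ) (hN : 1 ≤ N) (hK : 1 ≤ K) (x : ℕ → ℝ)
    (hdec : ∀ i j, 1 ≤ i → i < j → j ≤ N → x j < x i)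
    (ψ : ℝ → ℝ) (hψc : Continuous ψ) (hψs : HasCompactSupport ψ) :
    (1 / (K:ℝ)) * ∑ i ∈ Finset.Icc 1 N,
        (∫ y in Iic (x i), ψ y) * (if i ≤ K then (1:ℝ) else 0)
      = ∫ z : ℝ, ψ z * Bfun ((((Finset.Icc 1 N).filter fun i => z ≤ x i).card : ℝ) / K) := by
  have hK0 : (0:ℝ) < K := by exact_mod_cast hK
  have hint : Integrable ψ := hψc.integrable_of_hasCompactSupport hψs
  have hintI : ∀ i : ℕ, Integrable (fun z => (Iic (x i)).indicator ψ z) :=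
    fun i => hint.indicator measurableSet_Iic
  have key : ∀ z : ℝ,
      ψ z * Bfun ((((Finset.Icc 1 N).filter fun i => z ≤ x i).card : ℝ) / K)
        = ∑ i ∈ Finset.Icc 1 N,
            (if i ≤ K then (1:ℝ) else 0) * ((Iic (x i)).indicator ψ z) / K := by
    intro z
    set S := (Finset.Icc 1 N).filter (fun i => z ≤ x i) with hSdef
    set c := S.card with hcdef
    have hcN : c ≤ N := by
      have := Finset.card_le_card (Finset.filter_subset (fun i => z ≤ x i) (Finset.Icc 1 N))
      simpa [Nat.card_Icc] using this
    have hSeq : S = Finset.Icc 1 c := by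
      apply Finset.eq_of_subset_of_card_le
      · intro i hi
        have hi' := Finset.mem_filter.mp hi
        obtain ⟨h1i, hiN⟩ := Finset.mem_Icc.mp hi'.1
        have hsub : Finset.Icc 1 i ⊆ S := by
          intro j hj
          obtain ⟨h1j, hji⟩ := Finset.mem_Icc.mp hj
          refine Finset.mem_filter.mpr ⟨Finset.mem_Icc.mpr ⟨h1j, le_trans hji hiN⟩, ?_⟩
          rcases eq_or_lt_of_le hji with h | h
          · rw [h]; exact hi'.2
          · exact le_trans hi'.2 (le_of_lt (hdec j i h1j h hiN))
        have hic : i ≤ c := by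
          have := Finset.card_le_card hsub
          simpa [Nat.card_Icc] using this
        exact Finset.mem_Icc.mpr ⟨h1i, hic⟩
      · simp [Nat.card_Icc]; exact le_of_eq hcdef
    have hiff : ∀ i, 1 ≤ i → i ≤ N → (z ≤ x i ↔ i ≤ c) := by
      intro i h1 hN'
      constructor
      · intro h
        have hm : i ∈ S := Finset.mem_filter.mpr ⟨Finset.mem_Icc.mpr ⟨h1, hN'⟩, h⟩
        rw [hSeq] at hm; exact (Finset.mem_Icc.mp hm).2
      · intro h
        have hm : i ∈ S := by rw [hSeq]; exact Finset.mem_Icc.mpr ⟨h1, h⟩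
        exact (Finset.mem_filter.mp hm).2
    have hsum : ∑ i ∈ Finset.Icc 1 N,
        (if i ≤ K then (1:ℝ) else 0) * ((Iic (x i)).indicator ψ z) / K
        = ((min c K : ℕ) : ℝ) * ψ z / K := by
      have h1 : ∀ i ∈ Finset.Icc 1 N,
          (if i ≤ K then (1:ℝ) else 0) * ((Iic (x i)).indicator ψ z) / K
          = (if i ≤ min c K then (1:ℝ) else 0) * ψ z / K := by
        intro i hi
        obtain ⟨h1i, hiN⟩ := Finset.mem_Icc.mp hi
        have hind : (Iic (x i)).indicator ψ z = if z ≤ x i then ψ z else 0 := by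
          by_cases h : z ≤ x i <;> simp [Set.indicator_apply, Set.mem_Iic, h]
        rw [hind]
        by_cases hKi : i ≤ K <;> by_cases hci : i ≤ c <;>
          simp [hKi, hci, hiff i h1i hiN, le_min_iff]
      rw [Finset.sum_congr rfl h1]
      have h2 : ∑ i ∈ Finset.Icc 1 N, (if i ≤ min c K then (1:ℝ) else 0)
          = ((min c K : ℕ) : ℝ) := by
        rw [Finset.sum_boole]
        have hfe : (Finset.Icc 1 N).filter (fun i => i ≤ min c K) = Finset.Icc 1 (min c K) := by
          ext j
          simp only [Finset.mem_filter, Finset.mem_Icc]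
          have : min c K ≤ N := le_trans (min_le_left _ _) hcN
          omega
        rw [hfe, Nat.card_Icc]
        simp
      calc ∑ i ∈ Finset.Icc 1 N, (if i ≤ min c K then (1:ℝ) else 0) * ψ z / K
          = (∑ i ∈ Finset.Icc 1 N, (if i ≤ min c K then (1:ℝ) else 0)) * ψ z / K := by
            rw [← Finset.sum_div, ← Finset.sum_mul]
        _ = ((min c K : ℕ) : ℝ) * ψ z / K := by rw [h2]
    rw [hsum]
    have hB : Bfun ((c : ℝ) / K) = ((min c K : ℕ) : ℝ) / K := by
      unfold Bfun
      rw [show (1:ℝ) = (K:ℝ)/K from (div_self hK0.ne').symm,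
        min_div_div_right hK0.le, Nat.cast_min]
    rw [hB]
    ring
  have hRHS : (∫ z : ℝ, ψ z *
        Bfun ((((Finset.Icc 1 N).filter fun i => z ≤ x i).card : ℝ) / K))
      = ∑ i ∈ Finset.Icc 1 N,
          (if i ≤ K then (1:ℝ) else 0) * (∫ y in Iic (x i), ψ y) / K := by
    rw [MeasureTheory.integral_congr_ae (Filter.Eventually.of_forall key)]
    rw [MeasureTheory.integral_finset_sum _
      (fun i _ => ((hintI i).const_mul _).div_const _)]
    refine Finset.sum_congr rfl fun i _ => ?_
    rw [MeasureTheory.integral_div, MeasureTheory.integral_const_mul,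
      MeasureTheory.integral_indicator measurableSet_Iic]
  rw [hRHS, Finset.mul_sum]
  refine Finset.sum_congr rfl fun i _ => ?_
  by_cases h : i ≤ K <;> simp [h] <;> ring
end
end

section
/- Let α ∈ (0,1) and T > 0, and let G ∈ L^∞([0,T] × ℝ) be measurable. There exists a constant C > 0, depending only on α, such that for every t ∈ [0,T] the function w_t := ∫_0^t ∂_x e^{(t−s)∂_x²} G_s ds satisfies ‖w_t‖_{C^{0,α}(ℝ)} ≤ C ( √t + t^{(1−α)/2} ) ‖G‖_{L^∞([0,T]×ℝ)}. -/
open MeasureTheory Set Filter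

noncomputable section

/-- The heat kernel on `ℝ`: `(4πt)^{-1/2} exp(-x²/(4t))`. -/
def heatKernel (t x : ℝ) : ℝ :=
  (Real.sqrt (4 * Real.pi * t))⁻¹ * Real.exp (-(x ^ 2) / (4 * t))

/-- The heat semigroup `e^{t ∂_x²}` acting on functions on `ℝ`
(for `t = 0` it is the identity). -/
def heatOp (t : ℝ) (f : ℝ → ℝ) : ℝ → ℝ :=
  if t = 0 then f else fun x => ∫ y : ℝ, heatKernel t (x - y) * f y


lemma abs_mul_exp_le {β : ℝ} (hβ : 0 < β) (z : ℝ) :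
    |z| * Real.exp (-(β * z ^ 2)) ≤ (Real.sqrt β)⁻¹ := by
  have hs : 0 < Real.sqrt β := Real.sqrt_pos.2 hβ
  have hss : Real.sqrt β * Real.sqrt β = β := Real.mul_self_sqrt hβ.le
  have h1 : Real.sqrt β * |z| ≤ Real.exp (β * z ^ 2) := by
    have h2 := Real.add_one_le_exp (β * z ^ 2)
    nlinarith [sq_nonneg (Real.sqrt β * |z| - 1), sq_abs z]
  calc |z| * Real.exp (-(β * z ^ 2))
      ≤ (Real.exp (β * z ^ 2) / Real.sqrt β) * Real.exp (-(β * z ^ 2)) := by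
        apply mul_le_mul_of_nonneg_right _ (Real.exp_pos _).le
        rw [le_div_iff₀ hs]; linarith
    _ = (Real.sqrt β)⁻¹ := by
        rw [Real.exp_neg]; field_simp

lemma sq_mul_exp_le {β : ℝ} (hβ : 0 < β) (z : ℝ) :
    z ^ 2 * Real.exp (-(β * z ^ 2)) ≤ β⁻¹ := by
  have h1 : β * z ^ 2 ≤ Real.exp (β * z ^ 2) := by
    have h2 := Real.add_one_le_exp (β * z ^ 2)
    linarith
  calc z ^ 2 * Real.exp (-(β * z ^ 2))
      ≤ (Real.exp (β * z ^ 2) / β) * Real.exp (-(β * z ^ 2)) := by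
        apply mul_le_mul_of_nonneg_right _ (Real.exp_pos _).le
        rw [le_div_iff₀ hβ]; linarith
    _ = β⁻¹ := by rw [Real.exp_neg]; field_simp


lemma hasDerivAt_convInt {k k' f : ℝ → ℝ} {b c c' M : ℝ} (hb : 0 < b) (hc : 0 ≤ c) (hc' : 0 ≤ c')
    (hk : ∀ z, HasDerivAt k (k' z) z) (hk'm : Measurable k')
    (hkb : ∀ z, |k z| ≤ c * Real.exp (-(b * z ^ 2)))
    (hk'b : ∀ z, |k' z| ≤ c' * Real.exp (-(b * z ^ 2)))
    (hf : Measurable f) (hM : 0 ≤ M) (hfM : ∀ᵐ y : ℝ, |f y| ≤ M) (x₀ : ℝ) :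
    HasDerivAt (fun x => ∫ y : ℝ, k (x - y) * f y) (∫ y : ℝ, k' (x₀ - y) * f y) x₀ := by
  have hkc : Continuous k := Differentiable.continuous (fun z => (hk z).differentiableAt)
  have hkm : Measurable k := hkc.measurable
  have gauss_int : ∀ b' : ℝ, 0 < b' → Integrable (fun y : ℝ => Real.exp (-(b' * (x₀ - y) ^ 2))) := by
    intro b' hb'
    have h0 : Integrable (fun y : ℝ => Real.exp (-(b' * y ^ 2))) := by
      simpa [neg_mul] using integrable_exp_neg_mul_sq hb'
    exact (integrable_comp_sub_left (fun y : ℝ => Real.exp (-(b' * y ^ 2))) x₀).2 h0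
  have hmeas : ∀ x : ℝ, AEStronglyMeasurable (fun y : ℝ => k (x - y) * f y) volume := by
    intro x
    exact ((hkm.comp (measurable_const.sub measurable_id)).mul hf).aestronglyMeasurable
  have hint : Integrable (fun y : ℝ => k (x₀ - y) * f y) := by
    refine Integrable.mono' (((gauss_int b hb).const_mul c).mul_const M) (hmeas x₀) ?_
    filter_upwards [hfM] with y hy
    rw [norm_mul]
    exact mul_le_mul (hkb _) hy (abs_nonneg _)
      (by positivity)
  have h := hasDerivAt_integral_of_dominated_loc_of_deriv_le (E := ℝ) (μ := volume)
    (x₀ := x₀) (F := fun x y => k (x - y) * f y) (F' := fun x y => k' (x - y) * f y)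
    (bound := fun y => M * (c' * Real.exp b * Real.exp (-(b / 2 * (x₀ - y) ^ 2))))
    (s := Metric.ball x₀ 1) (Metric.ball_mem_nhds x₀ one_pos)
    (Eventually.of_forall hmeas) hint
    (((hk'm.comp (measurable_const.sub measurable_id)).mul hf).aestronglyMeasurable)
    ?_ ?_ ?_
  · exact h.2
  · filter_upwards [hfM] with y hy
    intro x hx
    have hxx : |x - x₀| < 1 := by
      simpa [Real.dist_eq] using (Metric.mem_ball.mp hx)
    have hexp : Real.exp (-(b * (x - y) ^ 2)) ≤ Real.exp b * Real.exp (-(b / 2 * (x₀ - y) ^ 2)) := by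
      rw [← Real.exp_add]
      apply Real.exp_le_exp.2
      have h2 : (x - x₀) ^ 2 < 1 := by
        have h := abs_lt.mp hxx
        nlinarith [h.1, h.2]
      have h3 : (x₀ - y) ^ 2 ≤ 2 * (x - y) ^ 2 + 2 := by
        nlinarith [sq_nonneg ((x - y) - (x₀ - x))]
      nlinarith [mul_le_mul_of_nonneg_left h3 (by positivity : (0:ℝ) ≤ b / 2)]
    rw [norm_mul, Real.norm_eq_abs, Real.norm_eq_abs]
    calc |k' (x - y)| * |f y| ≤ (c' * (Real.exp b * Real.exp (-(b / 2 * (x₀ - y) ^ 2)))) * M := by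
          apply mul_le_mul _ hy (abs_nonneg _) (by positivity)
          exact (hk'b _).trans (by
            rw [← mul_assoc]
            exact mul_le_mul_of_nonneg_left hexp hc' |>.trans_eq (by ring))
      _ = M * (c' * Real.exp b * Real.exp (-(b / 2 * (x₀ - y) ^ 2))) := by ring
  · exact (((gauss_int (b/2) (by linarith)).const_mul (c' * Real.exp b)).const_mul M)
  · refine Eventually.of_forall fun y => fun x _ => ?_
    have h1 : HasDerivAt (fun x : ℝ => k (x - y)) (k' (x - y)) x := by
      exact ((hk (x - y)).comp x ((hasDerivAt_id' x).sub_const y)).congr_deriv (mul_one _)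
    exact h1.mul_const (f y)

lemma abs_convInt_le {k' f : ℝ → ℝ} {b c' M : ℝ} (hb : 0 < b) (hc' : 0 ≤ c') (hM : 0 ≤ M)
    (hk'm : Measurable k') (hk'b : ∀ z, |k' z| ≤ c' * Real.exp (-(b * z ^ 2)))
    (hf : Measurable f) (hfM : ∀ᵐ y : ℝ, |f y| ≤ M) (x : ℝ) :
    |∫ y : ℝ, k' (x - y) * f y| ≤ c' * M * Real.sqrt (Real.pi / b) := by
  have h0 : Integrable (fun y : ℝ => Real.exp (-(b * y ^ 2))) := by
    simpa [neg_mul] using integrable_exp_neg_mul_sq hb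
  have gauss_int : Integrable (fun y : ℝ => Real.exp (-(b * (x - y) ^ 2))) :=
    (integrable_comp_sub_left (fun y : ℝ => Real.exp (-(b * y ^ 2))) x).2 h0
  have hbd : ∀ᵐ y : ℝ, ‖k' (x - y) * f y‖ ≤ c' * M * Real.exp (-(b * (x - y) ^ 2)) := by
    filter_upwards [hfM] with y hy
    rw [norm_mul, Real.norm_eq_abs, Real.norm_eq_abs]
    calc |k' (x - y)| * |f y| ≤ (c' * Real.exp (-(b * (x - y) ^ 2))) * M :=
          mul_le_mul (hk'b _) hy (abs_nonneg _) (by positivity)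
      _ = c' * M * Real.exp (-(b * (x - y) ^ 2)) := by ring
  calc |∫ y : ℝ, k' (x - y) * f y|
      ≤ ∫ y : ℝ, c' * M * Real.exp (-(b * (x - y) ^ 2)) := by
        exact norm_integral_le_of_norm_le ((gauss_int.const_mul _)) hbd
    _ = c' * M * ∫ y : ℝ, Real.exp (-(b * (x - y) ^ 2)) := by
        rw [MeasureTheory.integral_const_mul]
    _ = c' * M * Real.sqrt (Real.pi / b) := by
        rw [integral_sub_left_eq_self (fun y : ℝ => Real.exp (-(b * y ^ 2))) volume x]
        norm_num [neg_mul]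
        rw [← integral_gaussian b]
        norm_num [neg_mul]

lemma min_interp {u v α : ℝ} (hu : 0 < u) (hv : 0 ≤ v) (hα0 : 0 < α) (hα1 : α ≤ 1) :
    min u v ≤ u ^ (1 - α) * v ^ α := by
  rcases eq_or_lt_of_le hv with hv0 | hv0
  · rw [← hv0, Real.zero_rpow hα0.ne', mul_zero, min_eq_right hu.le]
  · rcases le_total u v with h | h
    · calc min u v ≤ u := min_le_left _ _
        _ = u ^ (1 - α) * u ^ α := by rw [← Real.rpow_add hu]; simp
        _ ≤ u ^ (1 - α) * v ^ α :=
            mul_le_mul_of_nonneg_left (Real.rpow_le_rpow hu.le h hα0.le)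
              (Real.rpow_nonneg hu.le _)
    · calc min u v ≤ v := min_le_right _ _
        _ = v ^ (1 - α) * v ^ α := by rw [← Real.rpow_add hv0]; simp
        _ ≤ u ^ (1 - α) * v ^ α :=
            mul_le_mul_of_nonneg_right (Real.rpow_le_rpow hv0.le h (by linarith))
              (Real.rpow_nonneg hv0.le _)


def K1 (τ z : ℝ) : ℝ := (-(z / (2 * τ))) * heatKernel τ z

def K2 (τ z : ℝ) : ℝ := (z ^ 2 / (4 * τ ^ 2) - 1 / (2 * τ)) * heatKernel τ z

lemma hasDerivAt_heatKernel {τ : ℝ} (hτ : 0 < τ) (z : ℝ) :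
    HasDerivAt (heatKernel τ) (K1 τ z) z := by
  unfold heatKernel K1 heatKernel
  have hE : HasDerivAt (fun z : ℝ => -(z ^ 2) / (4 * τ)) (-(2 * z) / (4 * τ)) z := by
    simpa using (((hasDerivAt_pow 2 z).neg).div_const (4 * τ))
  have h := (hE.exp).const_mul (Real.sqrt (4 * Real.pi * τ))⁻¹
  refine h.congr_deriv ?_
  field_simp
  ring

lemma hasDerivAt_K1 {τ : ℝ} (hτ : 0 < τ) (z : ℝ) :
    HasDerivAt (K1 τ) (K2 τ z) z := by
  unfold K1 K2 heatKernel
  have hE : HasDerivAt (fun z : ℝ => -(z ^ 2) / (4 * τ)) (-(2 * z) / (4 * τ)) z := by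
    simpa using (((hasDerivAt_pow 2 z).neg).div_const (4 * τ))
  have h1 : HasDerivAt (fun z : ℝ => -(z / (2 * τ))) (-(1 / (2 * τ))) z := by
    exact ((hasDerivAt_id' z).div_const (2 * τ)).neg
  have h := h1.mul ((hE.exp).const_mul (Real.sqrt (4 * Real.pi * τ))⁻¹)
  refine h.congr_deriv ?_
  have := hτ.ne'
  field_simp
  ring

lemma sqrt4pit_pos {τ : ℝ} (hτ : 0 < τ) : 0 < Real.sqrt (4 * Real.pi * τ) :=
  Real.sqrt_pos.2 (by positivity)

lemma heatKernel_exp_eq {τ : ℝ} (hτ : 0 < τ) (z : ℝ) :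
    Real.exp (-(z ^ 2) / (4 * τ)) =
      Real.exp (-((8 * τ)⁻¹ * z ^ 2)) * Real.exp (-((8 * τ)⁻¹ * z ^ 2)) := by
  rw [← Real.exp_add]
  congr 1
  field_simp
  ring

lemma bound_heatKernel {τ : ℝ} (hτ : 0 < τ) (z : ℝ) :
    |heatKernel τ z| ≤ (Real.sqrt (4 * Real.pi * τ))⁻¹ * Real.exp (-((8 * τ)⁻¹ * z ^ 2)) := by
  have ha := sqrt4pit_pos hτ
  rw [heatKernel, abs_mul, abs_of_pos (inv_pos.2 ha), abs_of_pos (Real.exp_pos _)]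
  apply mul_le_mul_of_nonneg_left _ (inv_pos.2 ha).le
  apply Real.exp_le_exp.2
  rw [div_eq_mul_inv, neg_mul]
  have : (4 * τ)⁻¹ ≥ (8 * τ)⁻¹ := by
    apply inv_anti₀ (by positivity) (by linarith)
  nlinarith [sq_nonneg z]

lemma bound_K1 {τ : ℝ} (hτ : 0 < τ) (z : ℝ) :
    |K1 τ z| ≤ ((Real.sqrt (4 * Real.pi * τ))⁻¹ * (2 / Real.sqrt τ)) *
      Real.exp (-((8 * τ)⁻¹ * z ^ 2)) := by
  have ha := sqrt4pit_pos hτ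
  have hβ : (0:ℝ) < (8 * τ)⁻¹ := by positivity
  have h1 : |z| * Real.exp (-((8 * τ)⁻¹ * z ^ 2)) ≤ Real.sqrt (8 * τ) := by
    have := abs_mul_exp_le hβ z
    rwa [Real.sqrt_inv, inv_inv] at this
  have hsq : Real.sqrt (8 * τ) / (2 * τ) ≤ 2 / Real.sqrt τ := by
    have hst : 0 < Real.sqrt τ := Real.sqrt_pos.2 hτ
    have h8 : Real.sqrt (8 * τ) = Real.sqrt 8 * Real.sqrt τ := Real.sqrt_mul (by norm_num) τ
    have h9 : Real.sqrt 8 ≤ 3 := by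
      nlinarith [Real.sq_sqrt (show (0:ℝ) ≤ 8 by norm_num), Real.sqrt_nonneg 8]
    have hss : Real.sqrt τ * Real.sqrt τ = τ := Real.mul_self_sqrt hτ.le
    rw [h8, div_le_div_iff₀ (by positivity) hst]
    nlinarith
  rw [K1, heatKernel, heatKernel_exp_eq hτ]
  have key : |(-(z / (2 * τ))) * ((Real.sqrt (4 * Real.pi * τ))⁻¹ *
      (Real.exp (-((8 * τ)⁻¹ * z ^ 2)) * Real.exp (-((8 * τ)⁻¹ * z ^ 2))))|
      = (Real.sqrt (4 * Real.pi * τ))⁻¹ * (|z| * Real.exp (-((8 * τ)⁻¹ * z ^ 2))) / (2 * τ) *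
        Real.exp (-((8 * τ)⁻¹ * z ^ 2)) := by
    rw [abs_mul, abs_neg, abs_div, abs_of_pos (show (0:ℝ) < 2 * τ by linarith),
      abs_of_pos (show (0:ℝ) < (Real.sqrt (4 * Real.pi * τ))⁻¹ *
        (Real.exp (-((8 * τ)⁻¹ * z ^ 2)) * Real.exp (-((8 * τ)⁻¹ * z ^ 2))) by positivity)]
    ring
  rw [key]
  apply mul_le_mul_of_nonneg_right _ (Real.exp_pos _).le
  calc (Real.sqrt (4 * Real.pi * τ))⁻¹ * (|z| * Real.exp (-((8 * τ)⁻¹ * z ^ 2))) / (2 * τ)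
      ≤ (Real.sqrt (4 * Real.pi * τ))⁻¹ * Real.sqrt (8 * τ) / (2 * τ) := by
        gcongr
    _ ≤ (Real.sqrt (4 * Real.pi * τ))⁻¹ * (2 / Real.sqrt τ) := by
        rw [mul_div_assoc]
        exact mul_le_mul_of_nonneg_left hsq (inv_pos.2 ha).le

lemma bound_K2 {τ : ℝ} (hτ : 0 < τ) (z : ℝ) :
    |K2 τ z| ≤ ((Real.sqrt (4 * Real.pi * τ))⁻¹ * (3 / τ)) *
      Real.exp (-((8 * τ)⁻¹ * z ^ 2)) := by
  have ha := sqrt4pit_pos hτ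
  have hβ : (0:ℝ) < (8 * τ)⁻¹ := by positivity
  have h1 : z ^ 2 * Real.exp (-((8 * τ)⁻¹ * z ^ 2)) ≤ 8 * τ := by
    have := sq_mul_exp_le hβ z
    rwa [inv_inv] at this
  rw [K2, heatKernel, heatKernel_exp_eq hτ]
  set e := Real.exp (-((8 * τ)⁻¹ * z ^ 2)) with he
  have hepos : 0 < e := Real.exp_pos _
  have habs : |(z ^ 2 / (4 * τ ^ 2) - 1 / (2 * τ)) * ((Real.sqrt (4 * Real.pi * τ))⁻¹ * (e * e))|
      ≤ (z ^ 2 / (4 * τ ^ 2) + 1 / (2 * τ)) * ((Real.sqrt (4 * Real.pi * τ))⁻¹ * (e * e)) := by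
    rw [abs_mul, abs_of_pos (by positivity : (0:ℝ) < (Real.sqrt (4 * Real.pi * τ))⁻¹ * (e * e))]
    apply mul_le_mul_of_nonneg_right _ (by positivity)
    rw [abs_sub_comm]
    refine (abs_sub _ _).trans ?_
    rw [abs_of_pos (by positivity : (0:ℝ) < 1 / (2*τ)), abs_of_nonneg (by positivity : (0:ℝ) ≤ z ^ 2 / (4 * τ ^ 2))]
    linarith
  refine habs.trans ?_
  have key : (z ^ 2 / (4 * τ ^ 2) + 1 / (2 * τ)) * ((Real.sqrt (4 * Real.pi * τ))⁻¹ * (e * e))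
      = (Real.sqrt (4 * Real.pi * τ))⁻¹ * ((z ^ 2 * e) / (4 * τ ^ 2) + e / (2 * τ)) * e := by
    ring
  rw [key]
  apply mul_le_mul_of_nonneg_right _ hepos.le
  apply mul_le_mul_of_nonneg_left _ (inv_pos.2 ha).le
  have he1 : e ≤ 1 := by
    rw [he, ← Real.exp_zero]
    exact Real.exp_le_exp.2 (by nlinarith [sq_nonneg z])
  calc (z ^ 2 * e) / (4 * τ ^ 2) + e / (2 * τ)
      ≤ (8 * τ) / (4 * τ ^ 2) + 1 / (2 * τ) := by
        gcongr
    _ = (5 / 2) / τ := by field_simp; ring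
    _ ≤ 3 / τ := by gcongr <;> norm_num

lemma num_sqrt2 : Real.sqrt 2 ≤ 3 / 2 := by
  nlinarith [Real.sq_sqrt (show (0:ℝ) ≤ 2 by norm_num), Real.sqrt_nonneg 2]

lemma pi_div_inv8 {τ : ℝ} (hτ : 0 < τ) :
    Real.sqrt (Real.pi / (8 * τ)⁻¹) = Real.sqrt 2 * Real.sqrt (4 * Real.pi * τ) := by
  rw [← Real.sqrt_mul (by norm_num : (0:ℝ) ≤ 2)]
  congr 1
  field_simp
  ring

lemma K1_measurable {τ : ℝ} (hτ : 0 < τ) : Measurable (K1 τ) :=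
  (Differentiable.continuous fun z => (hasDerivAt_K1 hτ z).differentiableAt).measurable

lemma K2_measurable {τ : ℝ} (hτ : 0 < τ) : Measurable (K2 τ) := by
  unfold K2 heatKernel
  fun_prop

lemma heat_core {τ M : ℝ} (hτ : 0 < τ) (hM : 0 ≤ M) {f : ℝ → ℝ}
    (hf : Measurable f) (hfM : ∀ᵐ y : ℝ, |f y| ≤ M) :
    (∀ x, HasDerivAt (heatOp τ f) (∫ y : ℝ, K1 τ (x - y) * f y) x) ∧
    (∀ x, |∫ y : ℝ, K1 τ (x - y) * f y| ≤ 3 * M / Real.sqrt τ) ∧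
    (∀ x x', |(∫ y : ℝ, K1 τ (x - y) * f y) - ∫ y : ℝ, K1 τ (x' - y) * f y|
        ≤ 5 * M / τ * |x - x'|) := by
  have ha := sqrt4pit_pos hτ
  have hst : 0 < Real.sqrt τ := Real.sqrt_pos.2 hτ
  have hss : Real.sqrt τ * Real.sqrt τ = τ := Real.mul_self_sqrt hτ.le
  have hb : (0:ℝ) < (8 * τ)⁻¹ := by positivity
  have hc : (0:ℝ) ≤ (Real.sqrt (4 * Real.pi * τ))⁻¹ := by positivity
  have hc' : (0:ℝ) ≤ (Real.sqrt (4 * Real.pi * τ))⁻¹ * (2 / Real.sqrt τ) := by positivity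
  have hc'' : (0:ℝ) ≤ (Real.sqrt (4 * Real.pi * τ))⁻¹ * (3 / τ) := by positivity
  refine ⟨?_, ?_, ?_⟩
  · intro x
    have he : heatOp τ f = fun x => ∫ y : ℝ, heatKernel τ (x - y) * f y := by
      rw [heatOp, if_neg hτ.ne']
    rw [he]
    exact hasDerivAt_convInt hb hc hc' (hasDerivAt_heatKernel hτ) (K1_measurable hτ)
      (bound_heatKernel hτ) (bound_K1 hτ) hf hM hfM x
  · intro x
    refine (abs_convInt_le hb hc' hM (K1_measurable hτ) (bound_K1 hτ) hf hfM x).trans ?_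
    rw [pi_div_inv8 hτ]
    have key : (Real.sqrt (4 * Real.pi * τ))⁻¹ * (2 / Real.sqrt τ) * M *
        (Real.sqrt 2 * Real.sqrt (4 * Real.pi * τ)) = 2 * Real.sqrt 2 * M / Real.sqrt τ := by
      field_simp
    rw [key]
    rw [div_le_div_iff₀ hst hst]
    nlinarith [num_sqrt2, mul_nonneg hM hst.le]
  · intro x x'
    have hD : ∀ z, HasDerivAt (fun x => ∫ y : ℝ, K1 τ (x - y) * f y)
        (∫ y : ℝ, K2 τ (z - y) * f y) z := fun z =>
      hasDerivAt_convInt hb hc' hc'' (hasDerivAt_K1 hτ) (K2_measurable hτ)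
        (bound_K1 hτ) (bound_K2 hτ) hf hM hfM z
    have hDb : ∀ z, |∫ y : ℝ, K2 τ (z - y) * f y| ≤ 5 * M / τ := by
      intro z
      refine (abs_convInt_le hb hc'' hM (K2_measurable hτ) (bound_K2 hτ) hf hfM z).trans ?_
      rw [pi_div_inv8 hτ]
      have key : (Real.sqrt (4 * Real.pi * τ))⁻¹ * (3 / τ) * M *
          (Real.sqrt 2 * Real.sqrt (4 * Real.pi * τ)) = 3 * Real.sqrt 2 * M / τ := by
        field_simp
      rw [key]
      rw [div_le_div_iff₀ hτ hτ]
      nlinarith [num_sqrt2, mul_nonneg hM hτ.le]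
    have := Convex.norm_image_sub_le_of_norm_hasDerivWithin_le
      (f := fun x => ∫ y : ℝ, K1 τ (x - y) * f y)
      (f' := fun z => ∫ y : ℝ, K2 τ (z - y) * f y) (s := Set.univ)
      (fun z _ => (hD z).hasDerivWithinAt)
      (fun z _ => by rw [Real.norm_eq_abs]; exact hDb z)
      convex_univ (mem_univ x') (mem_univ x)
    rw [Real.norm_eq_abs, Real.norm_eq_abs] at this
    exact this

lemma rpow_neg_half {τ : ℝ} (hτ : 0 < τ) : τ ^ (-(1:ℝ)/2) = (Real.sqrt τ)⁻¹ := by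
  rw [neg_div, Real.rpow_neg hτ.le, Real.sqrt_eq_rpow]

lemma diff_bound {Mg r τ α d : ℝ} (hMg : 0 ≤ Mg) (hτ : 0 < τ) (hr : 0 ≤ r)
    (hα0 : 0 < α) (hα1 : α < 1)
    (h1 : |d| ≤ 6 * Mg / Real.sqrt τ) (h2 : |d| ≤ 5 * Mg / τ * r) :
    |d| ≤ 6 * Mg * r ^ α * τ ^ (-((1 + α) / 2)) := by
  rcases eq_or_lt_of_le hMg with h0 | h0
  · have : |d| ≤ 0 := by
      rw [← h0] at h1; simpa using h1
    refine this.trans (by positivity)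
  · have hst : 0 < Real.sqrt τ := Real.sqrt_pos.2 hτ
    have hu : (0:ℝ) < 6 * Mg * τ ^ (-(1:ℝ)/2) := by positivity
    have hv : (0:ℝ) ≤ 6 * Mg * r * τ⁻¹ := by positivity
    have hmin : |d| ≤ min (6 * Mg * τ ^ (-(1:ℝ)/2)) (6 * Mg * r * τ⁻¹) := by
      refine le_min ?_ ?_
      · rw [rpow_neg_half hτ]
        rw [div_eq_mul_inv] at h1
        exact h1.trans_eq (by ring)
      · refine h2.trans ?_
        rw [div_eq_mul_inv]
        have : 5 * Mg * τ⁻¹ * r ≤ 6 * Mg * r * τ⁻¹ := by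
          have : (0:ℝ) ≤ Mg * τ⁻¹ * r := by positivity
          nlinarith
        linarith [this]
    refine hmin.trans ((min_interp hu hv hα0 hα1.le).trans_eq ?_)
    have h6 : (0:ℝ) < 6 * Mg := by linarith
    rcases eq_or_lt_of_le hr with hr0 | hr0
    · rw [← hr0]
      simp [Real.zero_rpow hα0.ne']
    · have e1 : (6 * Mg * τ ^ (-(1:ℝ)/2)) ^ (1 - α)
          = (6 * Mg) ^ (1 - α) * τ ^ ((-(1:ℝ)/2) * (1 - α)) := by
        rw [Real.mul_rpow h6.le (by positivity), ← Real.rpow_mul hτ.le]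
      have e2 : (6 * Mg * r * τ⁻¹) ^ α = (6 * Mg) ^ α * r ^ α * τ ^ (-α * 1) := by
        rw [Real.mul_rpow (by positivity) (by positivity),
          Real.mul_rpow h6.le hr0.le, ← Real.rpow_neg_one τ, ← Real.rpow_mul hτ.le]
        ring_nf
      rw [e1, e2]
      rw [show (6 * Mg) ^ (1 - α) * τ ^ ((-(1:ℝ)/2) * (1 - α)) *
          ((6 * Mg) ^ α * r ^ α * τ ^ (-α * 1))
          = ((6 * Mg) ^ (1 - α) * (6 * Mg) ^ α) * r ^ α *
            (τ ^ ((-(1:ℝ)/2) * (1 - α)) * τ ^ (-α * 1)) by ring]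
      rw [← Real.rpow_add h6, ← Real.rpow_add hτ]
      rw [show (1 - α) + α = (1:ℝ) by ring, Real.rpow_one,
        show (-(1:ℝ)/2) * (1 - α) + -α * 1 = -((1 + α)/2) by ring]

/-- For `α ∈ (0,1)` there is `C > 0` (depending only on `α`)
such that for every `T > 0`, every measurable `G` with `|G| ≤ Mg` a.e. on
`[0,T] × ℝ`, and every `t ∈ [0,T]`, the function
`w_t = ∫_0^t ∂_x e^{(t−s)∂_x²} G_s ds` satisfies
`‖w_t‖_{C^{0,α}} ≤ C (√t + t^{(1−α)/2}) Mg`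
(both its sup norm and its `α`-Hölder seminorm are bounded by this quantity). -/
theorem duhamel_deriv_holder_bound
    (α : ℝ) (hα : α ∈ Ioo (0:ℝ) 1) :
    ∃ C > (0:ℝ), ∀ T : ℝ, 0 < T → ∀ G : ℝ → ℝ → ℝ,
      Measurable (fun p : ℝ × ℝ => G p.1 p.2) →
      ∀ Mg : ℝ,
      (∀ᵐ (p : ℝ × ℝ) ∂volume, p.1 ∈ Icc (0:ℝ) T → |G p.1 p.2| ≤ Mg) →
      ∀ t ∈ Icc (0:ℝ) T,
        (∀ x : ℝ, |∫ s in (0:ℝ)..t, deriv (heatOp (t - s) (G s)) x|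
            ≤ C * (Real.sqrt t + t ^ ((1 - α)/2)) * Mg) ∧
        (∀ x y : ℝ,
          |(∫ s in (0:ℝ)..t, deriv (heatOp (t - s) (G s)) x)
              - ∫ s in (0:ℝ)..t, deriv (heatOp (t - s) (G s)) y|
            ≤ C * (Real.sqrt t + t ^ ((1 - α)/2)) * Mg * |x - y| ^ α) := by
  obtain ⟨hα0, hα1⟩ := hα
  have h1α : (0:ℝ) < 1 - α := by linarith
  refine ⟨12 / (1 - α), by positivity, ?_⟩
  intro T hT G hGm Mg hGbd t ht
  -- slice the a.e. bound
  have hGbd' : ∀ᵐ s : ℝ, ∀ᵐ y : ℝ, s ∈ Icc (0:ℝ) T → |G s y| ≤ Mg := by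
    rw [MeasureTheory.Measure.volume_eq_prod] at hGbd
    exact Measure.ae_ae_of_ae_prod hGbd
  -- Mg is nonnegative
  have hMg : 0 ≤ Mg := by
    haveI : (MeasureTheory.ae (volume.restrict (Icc (0:ℝ) T))).NeBot := by
      rw [ae_neBot, Ne, Measure.restrict_eq_zero]
      rw [Real.volume_Icc]
      simp only [sub_zero, ENNReal.ofReal_eq_zero, not_le]
      linarith
    have h2 : ∀ᵐ s ∂(volume.restrict (Icc (0:ℝ) T)),
        ∀ᵐ y : ℝ, s ∈ Icc (0:ℝ) T → |G s y| ≤ Mg := ae_restrict_of_ae hGbd'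
    have h3 : ∀ᵐ s ∂(volume.restrict (Icc (0:ℝ) T)), s ∈ Icc (0:ℝ) T :=
      ae_restrict_mem measurableSet_Icc
    obtain ⟨s₀, hs₁, hs₂⟩ := (h2.and h3).exists
    haveI : (MeasureTheory.ae (volume : Measure ℝ)).NeBot := by
      rw [ae_neBot]
      intro h
      have := congrArg (fun μ : Measure ℝ => μ (Icc (0:ℝ) 1)) h
      simp [Real.volume_Icc] at this
    obtain ⟨y₀, hy₀⟩ := hs₁.exists
    exact le_trans (abs_nonneg _) (hy₀ hs₂)
  obtain ⟨ht0, htT⟩ := ht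
  rcases eq_or_lt_of_le ht0 with h0 | h0
  · -- t = 0
    constructor
    · intro x
      rw [← h0]
      simp [Real.zero_rpow (by positivity : ((1 - α)/2 : ℝ) ≠ 0)]
    · intro x y
      rw [← h0]
      simp [Real.zero_rpow (by positivity : ((1 - α)/2 : ℝ) ≠ 0)]
  -- main case 0 < t
  have hGs : ∀ s, Measurable (G s) := fun s => hGm.comp measurable_prodMk_left
  set D : ℝ → ℝ → ℝ := fun s x => ∫ y : ℝ, K1 (t - s) (x - y) * G s y with hDdef
  have hgood' : ∀ᵐ s : ℝ, s ∈ Ioc 0 t → s ∈ Ioo 0 t ∧ ∀ᵐ y : ℝ, |G s y| ≤ Mg := by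
    have h3 : ∀ᵐ s : ℝ, s ≠ t := by
      rw [ae_iff]
      convert measure_singleton (μ := (volume : Measure ℝ)) t using 2
      ext u
      simp
    filter_upwards [hGbd', h3] with s hs1 hs3 hmem
    refine ⟨⟨hmem.1, lt_of_le_of_ne hmem.2 hs3⟩, ?_⟩
    filter_upwards [hs1] with y hy
    exact hy ⟨hmem.1.le, hmem.2.trans htT⟩
  have hcore : ∀ s, s ∈ Ioo 0 t → (∀ᵐ y : ℝ, |G s y| ≤ Mg) →
      (∀ x, deriv (heatOp (t - s) (G s)) x = D s x) ∧
      (∀ x, |D s x| ≤ 3 * Mg / Real.sqrt (t - s)) ∧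
      (∀ x x', |D s x - D s x'| ≤ 5 * Mg / (t - s) * |x - x'|) := by
    intro s hs hsM
    have hτ : 0 < t - s := by linarith [hs.2]
    obtain ⟨hd, hb2, hb3⟩ := heat_core hτ hMg (hGs s) hsM
    exact ⟨fun x => (hd x).deriv, hb2, hb3⟩
  -- measurability of s ↦ D s x
  have hDm : ∀ x : ℝ, AEStronglyMeasurable (fun s => D s x) (volume.restrict (Ioc (0:ℝ) t)) := by
    intro x
    have hjm : Measurable (fun q : ℝ × ℝ => K1 (t - q.1) (x - q.2) * G q.1 q.2) := by
      apply Measurable.mul _ hGm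
      unfold K1 heatKernel
      fun_prop
    exact (hjm.stronglyMeasurable.integral_prod_right').measurable.aestronglyMeasurable
  -- integrability lemmas
  have hIrpow : ∀ r : ℝ, -1 < r → IntervalIntegrable (fun s : ℝ => (t - s) ^ r) volume 0 t := by
    intro r hr
    have h2 := ((intervalIntegral.intervalIntegrable_rpow' (a := 0) (b := t) hr).comp_sub_left t).symm
    simpa using h2
  have hIval : ∀ r : ℝ, -1 < r → (∫ s in (0:ℝ)..t, (t - s) ^ r) = t ^ (r + 1) / (r + 1) := by
    intro r hr
    rw [intervalIntegral.integral_comp_sub_left (fun s : ℝ => s ^ r) t]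
    simp only [sub_self, sub_zero]
    rw [integral_rpow (Or.inl hr), Real.zero_rpow (by linarith : r + 1 ≠ 0)]
    ring
  -- a.e. bounds on restricted measure
  have hgoodR : ∀ᵐ s ∂(volume.restrict (Ioc (0:ℝ) t)),
      s ∈ Ioo 0 t ∧ ∀ᵐ y : ℝ, |G s y| ≤ Mg := by
    have := (ae_restrict_iff' measurableSet_Ioc).2 hgood'
    exact this
  have hDint : ∀ x : ℝ, IntervalIntegrable (fun s => D s x) volume 0 t := by
    intro x
    rw [intervalIntegrable_iff_integrableOn_Ioc_of_le h0.le]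
    have hbint : IntegrableOn (fun s : ℝ => 3 * Mg * (t - s) ^ (-(1:ℝ)/2)) (Ioc 0 t) := by
      rw [← intervalIntegrable_iff_integrableOn_Ioc_of_le h0.le]
      exact (hIrpow (-(1:ℝ)/2) (by norm_num)).const_mul _
    refine Integrable.mono' hbint (hDm x) ?_
    filter_upwards [hgoodR] with s hs
    have hτ : 0 < t - s := by linarith [hs.1.2]
    rw [Real.norm_eq_abs, mul_assoc, rpow_neg_half hτ, ← div_eq_mul_inv, ← mul_div_assoc]
    exact ((hcore s hs.1 hs.2).2.1 x)
  have heq : ∀ x : ℝ, (∫ s in (0:ℝ)..t, deriv (heatOp (t - s) (G s)) x)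
      = ∫ s in (0:ℝ)..t, D s x := by
    intro x
    apply intervalIntegral.integral_congr_ae
    rw [uIoc_of_le h0.le]
    filter_upwards [hgood'] with s hs hmem
    exact (hcore s (hs hmem).1 (hs hmem).2).1 x
  have hS : 0 ≤ Real.sqrt t := Real.sqrt_nonneg t
  have hP : 0 ≤ t ^ ((1 - α)/2) := Real.rpow_nonneg ht0 _
  have h12 : (12:ℝ) ≤ 12 / (1 - α) := by
    rw [le_div_iff₀ h1α]
    nlinarith
  constructor
  · -- sup bound
    intro x
    rw [heq x]
    have hb1 : |∫ s in (0:ℝ)..t, D s x|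
        ≤ |∫ s in (0:ℝ)..t, 3 * Mg * (t - s) ^ (-(1:ℝ)/2)| := by
      rw [← Real.norm_eq_abs (∫ s in (0:ℝ)..t, D s x)]
      apply intervalIntegral.norm_integral_le_abs_of_norm_le _
        ((hIrpow (-(1:ℝ)/2) (by norm_num)).const_mul _)
      rw [uIoc_of_le h0.le]
      filter_upwards [hgoodR] with s hs
      have hτ : 0 < t - s := by linarith [hs.1.2]
      rw [Real.norm_eq_abs, mul_assoc, rpow_neg_half hτ, ← div_eq_mul_inv, ← mul_div_assoc]
      exact ((hcore s hs.1 hs.2).2.1 x)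
    have hval : (∫ s in (0:ℝ)..t, 3 * Mg * (t - s) ^ (-(1:ℝ)/2)) = 6 * Mg * Real.sqrt t := by
      rw [intervalIntegral.integral_const_mul, hIval (-(1:ℝ)/2) (by norm_num)]
      rw [show (-(1:ℝ)/2) + 1 = (1:ℝ)/2 by norm_num, ← Real.sqrt_eq_rpow]
      ring
    rw [hval] at hb1
    refine hb1.trans ?_
    rw [abs_of_nonneg (by positivity)]
    nlinarith [mul_nonneg hMg hS, mul_nonneg hMg hP, mul_nonneg (mul_nonneg hMg hS) h1α.le]
  · -- Hölder bound
    intro x y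
    rw [heq x, heq y, ← intervalIntegral.integral_sub (hDint x) (hDint y)]
    have hr : 0 ≤ |x - y| := abs_nonneg _
    have hb1 : |∫ s in (0:ℝ)..t, (D s x - D s y)|
        ≤ |∫ s in (0:ℝ)..t, 6 * Mg * |x - y| ^ α * (t - s) ^ (-((1 + α)/2))| := by
      rw [← Real.norm_eq_abs (∫ s in (0:ℝ)..t, (D s x - D s y))]
      apply intervalIntegral.norm_integral_le_abs_of_norm_le _
        ((hIrpow (-((1 + α)/2)) (by linarith)).const_mul _)
      rw [uIoc_of_le h0.le]
      filter_upwards [hgoodR] with s hs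
      have hτ : 0 < t - s := by linarith [hs.1.2]
      obtain ⟨_, hbd2, hbd3⟩ := hcore s hs.1 hs.2
      rw [Real.norm_eq_abs]
      apply diff_bound hMg hτ hr hα0 hα1
      · calc |D s x - D s y| ≤ |D s x| + |D s y| := abs_sub _ _
          _ ≤ 3 * Mg / Real.sqrt (t - s) + 3 * Mg / Real.sqrt (t - s) :=
              add_le_add (hbd2 x) (hbd2 y)
          _ = 6 * Mg / Real.sqrt (t - s) := by ring
      · exact hbd3 x y
    have hval : (∫ s in (0:ℝ)..t, 6 * Mg * |x - y| ^ α * (t - s) ^ (-((1 + α)/2)))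
        = 12 / (1 - α) * Mg * |x - y| ^ α * t ^ ((1 - α)/2) := by
      rw [intervalIntegral.integral_const_mul, hIval (-((1 + α)/2)) (by linarith)]
      rw [show -((1 + α)/2) + 1 = (1 - α)/2 by ring]
      field_simp
      ring
    rw [hval] at hb1
    refine hb1.trans ?_
    have hra : 0 ≤ |x - y| ^ α := Real.rpow_nonneg hr _
    rw [abs_of_nonneg (by positivity)]
    nlinarith [mul_nonneg (mul_nonneg hMg hra) hS, mul_nonneg (mul_nonneg hMg hra) hP,
      mul_nonneg (mul_nonneg (mul_nonneg hMg hra) hS) h1α.le]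
end
end

section
/- Let χ > 1 and σ* := χ + 1/χ. Define u^{σ*}(z) := χ e^{−χ z} for z > 0 and u^{σ*}(z) := χ for z ≤ 0. Then u^{σ*} is continuous, bounded, nonnegative, integrable on [0,∞) with ∫_0^∞ u^{σ*}(z) dz = 1, and the function u_t(x) := u^{σ*}(x − σ* t) is, for every T > 0, a weak solution on [0,T] of ∂_t u = ∂_x² u − χ ∂_x( u ã(∫_x^∞ u) ) + u b̃(∫_x^∞ u). -/
open MeasureTheory Set Filter

noncomputable section

/-- Partial derivative in the time variable. -/
def pdt (φ : ℝ → ℝ → ℝ) (t x : ℝ) : ℝ := deriv (fun s => φ s x) t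

/-- Partial derivative in the space variable. -/
def pdx (φ : ℝ → ℝ → ℝ) (t x : ℝ) : ℝ := deriv (fun y => φ t y) x

/-- Second partial derivative in the space variable. -/
def pdxx (φ : ℝ → ℝ → ℝ) (t x : ℝ) : ℝ := deriv (deriv (fun y => φ t y)) x

/-- A test function of class `C_c^{1,2}`: compactly supported, jointly continuous,
`C¹` in time and `C²` in space with jointly continuous partial derivatives. -/
def IsTestFun (φ : ℝ → ℝ → ℝ) : Prop :=
  HasCompactSupport (fun p : ℝ × ℝ => φ p.1 p.2) ∧
  Continuous (fun p : ℝ × ℝ => φ p.1 p.2) ∧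
  (∀ x, Differentiable ℝ fun t => φ t x) ∧
  Continuous (fun p : ℝ × ℝ => pdt φ p.1 p.2) ∧
  (∀ t, Differentiable ℝ (φ t)) ∧
  Continuous (fun p : ℝ × ℝ => pdx φ p.1 p.2) ∧
  (∀ t, Differentiable ℝ (deriv (φ t))) ∧
  Continuous (fun p : ℝ × ℝ => pdxx φ p.1 p.2)

/-- A weak solution on `[0,T]` of
`∂_t u = ∂_x² u − χ ∂_x(u ã(∫_x^∞ u)) + u b̃(∫_x^∞ u)`:
`t ↦ u_t` takes values in `L¹_loc(ℝ)`, each `u_t` is integrable on `[0,∞)`,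
`t ↦ u_t` is continuous for the `L¹_loc` topology, and the weak formulation
holds against every `C_c^{1,2}` test function, where `F_s(x) = ∫_x^∞ u_s`. -/
def IsWeakSolU (χ T : ℝ) (u : ℝ → ℝ → ℝ) : Prop :=
  (∀ t ∈ Icc (0:ℝ) T, LocallyIntegrable (u t)) ∧
  (∀ t ∈ Icc (0:ℝ) T, IntegrableOn (u t) (Ici 0)) ∧
  (∀ t₀ ∈ Icc (0:ℝ) T, ∀ R > (0:ℝ),
    Tendsto (fun t => ∫ x in (-R)..R, |u t x - u t₀ x|)
      (nhdsWithin t₀ (Icc 0 T)) (nhds 0)) ∧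
  (∀ φ : ℝ → ℝ → ℝ, IsTestFun φ → ∀ t ∈ Icc (0:ℝ) T,
    ((∫ x : ℝ, φ t x * u t x) - ∫ x : ℝ, φ 0 x * u 0 x)
      = ∫ x : ℝ, ∫ s in (0:ℝ)..t,
          (u s x * pdt φ s x + u s x * pdxx φ s x
            + χ * ta (∫ y in Ioi x, u s y) * u s x * pdx φ s x
            + tb (∫ y in Ioi x, u s y) * u s x * φ s x))

/-- The pushed traveling wave profile (`χ > 1`): `u^{σ*}(z) = χ e^{−χz}` for `z > 0`
and `u^{σ*}(z) = χ` for `z ≤ 0`. -/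
def uprofPushed (χ : ℝ) (z : ℝ) : ℝ :=
  if 0 < z then χ * Real.exp (-(χ * z)) else χ


namespace PW

variable {φ : ℝ → ℝ → ℝ}

lemma uprof_eq (χ z : ℝ) : uprofPushed χ z = χ * Real.exp (-(χ * max z 0)) := by
  unfold uprofPushed
  by_cases h : 0 < z
  · rw [if_pos h, max_eq_left h.le]
  · rw [if_neg h, max_eq_right (not_lt.1 h), mul_zero, neg_zero, Real.exp_zero, mul_one]

lemma uprof_cont (χ : ℝ) : Continuous (uprofPushed χ) := by
  have : uprofPushed χ = fun z => χ * Real.exp (-(χ * max z 0)) := funext (uprof_eq χ)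
  rw [this]
  continuity

lemma uprof_nonneg {χ : ℝ} (hχ : 0 ≤ χ) (z : ℝ) : 0 ≤ uprofPushed χ z := by
  rw [uprof_eq]; positivity

lemma uprof_le_exp {χ : ℝ} (hχ : 0 ≤ χ) (z : ℝ) :
    uprofPushed χ z ≤ χ * Real.exp (-(χ * z)) := by
  rw [uprof_eq]
  apply mul_le_mul_of_nonneg_left _ hχ
  apply Real.exp_le_exp.2
  have : χ * z ≤ χ * max z 0 := mul_le_mul_of_nonneg_left (le_max_left _ _) hχ
  linarith

lemma uprof_abs_le {χ : ℝ} (hχ : 0 ≤ χ) (z : ℝ) : |uprofPushed χ z| ≤ χ := by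
  rw [abs_of_nonneg (uprof_nonneg hχ z), uprof_eq]
  calc χ * Real.exp (-(χ * max z 0)) ≤ χ * 1 := by
        gcongr
        exact Real.exp_le_one_iff.2 (neg_nonpos.2 (by positivity))
    _ = χ := mul_one χ

lemma exp_neg_lip {a b : ℝ} (ha : 0 ≤ a) (hb : 0 ≤ b) :
    |Real.exp (-a) - Real.exp (-b)| ≤ |a - b| := by
  wlog h : b ≤ a generalizing a b
  · rw [abs_sub_comm, abs_sub_comm a b]; exact this hb ha (le_of_not_ge h)
  rw [abs_of_nonpos (by simp [Real.exp_le_exp, h]), abs_of_nonneg (sub_nonneg.2 h), neg_sub]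
  have h1 : Real.exp (-b) - Real.exp (-a) = Real.exp (-b) * (1 - Real.exp (-(a - b))) := by
    rw [mul_sub, mul_one, ← Real.exp_add]; ring_nf
  rw [h1]
  have h2 : 1 - Real.exp (-(a - b)) ≤ a - b := by
    have := Real.add_one_le_exp (-(a - b)); linarith
  have h3 : Real.exp (-b) ≤ 1 := Real.exp_le_one_iff.2 (by linarith)
  have h4 : 0 ≤ 1 - Real.exp (-(a-b)) := by
    have : Real.exp (-(a-b)) ≤ 1 := Real.exp_le_one_iff.2 (by linarith)
    linarith
  calc Real.exp (-b) * (1 - Real.exp (-(a - b))) ≤ 1 * (a - b) := by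
        apply mul_le_mul h3 h2 h4 zero_le_one
    _ = a - b := one_mul _

lemma uprof_lip {χ : ℝ} (hχ : 0 ≤ χ) (z w : ℝ) :
    |uprofPushed χ z - uprofPushed χ w| ≤ χ^2 * |z - w| := by
  rw [uprof_eq, uprof_eq, ← mul_sub, abs_mul, abs_of_nonneg hχ]
  have h1 : |Real.exp (-(χ * max z 0)) - Real.exp (-(χ * max w 0))| ≤ |χ * max z 0 - χ * max w 0| :=
    exp_neg_lip (by positivity) (by positivity)
  have h2 : |χ * max z 0 - χ * max w 0| ≤ χ * |z - w| := by
    rw [← mul_sub, abs_mul, abs_of_nonneg hχ]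
    exact mul_le_mul_of_nonneg_left (abs_max_sub_max_le_abs _ _ _) hχ
  calc χ * |Real.exp (-(χ * max z 0)) - Real.exp (-(χ * max w 0))| ≤ χ * (χ * |z - w|) :=
        mul_le_mul_of_nonneg_left (h1.trans h2) hχ
    _ = χ^2 * |z - w| := by ring

lemma exp_integrableOn_Ici (χ : ℝ) (hχ : 0 < χ) (c d : ℝ) :
    IntegrableOn (fun x : ℝ => c * Real.exp (-(χ * x))) (Ici d) := by
  have := (exp_neg_integrableOn_Ioi d hχ).const_mul c
  rw [integrableOn_Ici_iff_integrableOn_Ioi]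
  simpa [neg_mul, IntegrableOn] using this

lemma uprof_shift_integrableOn {χ : ℝ} (hχ : 0 < χ) (c d : ℝ) :
    IntegrableOn (fun x => uprofPushed χ (x - c)) (Ici d) := by
  apply Integrable.mono' (exp_integrableOn_Ici χ hχ (χ * Real.exp (χ * c)) d)
  · exact ((uprof_cont χ).comp (continuous_id.sub continuous_const)).aestronglyMeasurable
  · filter_upwards with x
    rw [Real.norm_eq_abs, abs_of_nonneg (uprof_nonneg hχ.le _)]
    calc uprofPushed χ (x - c) ≤ χ * Real.exp (-(χ * (x - c))) := uprof_le_exp hχ.le _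
      _ = χ * Real.exp (χ * c) * Real.exp (-(χ * x)) := by
          rw [mul_assoc, ← Real.exp_add]; ring_nf

lemma integral_uprof_Ioi {χ : ℝ} (hχ : 0 < χ) {z : ℝ} (hz : 0 ≤ z) :
    ∫ x in Ioi z, uprofPushed χ x = Real.exp (-(χ * z)) := by
  have hcongr : ∀ x ∈ Ioi z, uprofPushed χ x = χ * Real.exp (-(χ * x)) := by
    intro x hx
    rw [uprofPushed, if_pos (lt_of_le_of_lt hz hx)]
  rw [setIntegral_congr_fun measurableSet_Ioi hcongr]
  have hderiv : ∀ x ∈ Ici z, HasDerivAt (fun y => -Real.exp (-(χ * y)))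
      (χ * Real.exp (-(χ * x))) x := by
    intro x _
    have h1 : HasDerivAt (fun y : ℝ => -(χ * y)) (-χ) x := by
      exact (((hasDerivAt_id x).const_mul χ).neg).congr_deriv (by simp)
    have := (h1.exp).neg
    exact this.congr_deriv (by ring)
  have hint : IntegrableOn (fun x => χ * Real.exp (-(χ * x))) (Ioi z) := by
    have := (exp_neg_integrableOn_Ioi z hχ).const_mul χ
    simpa [neg_mul, IntegrableOn] using this
  have htend : Tendsto (fun y => -Real.exp (-(χ * y))) atTop (nhds 0) := by
    rw [show (0:ℝ) = -0 by ring]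
    apply Tendsto.neg
    apply Real.tendsto_exp_atBot.comp
    exact tendsto_neg_atBot_iff.2 (tendsto_id.const_mul_atTop hχ)
  rw [MeasureTheory.integral_Ioi_of_hasDerivAt_of_tendsto' hderiv hint htend]
  ring


lemma setIntegral_Ioi_comp_sub_right (f : ℝ → ℝ) (x c : ℝ) :
    ∫ y in Ioi x, f (y - c) = ∫ y in Ioi (x - c), f y := by
  have h1 : ∫ y in Ioi x, f (y - c) = ∫ y, (Ioi (x - c)).indicator f (y - c) := by
    rw [← integral_indicator measurableSet_Ioi]
    congr 1
    ext y
    by_cases h : x < y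
    · rw [indicator_of_mem (mem_Ioi.2 h), indicator_of_mem (mem_Ioi.2 (by linarith))]
    · rw [indicator_of_notMem (by simpa using h), indicator_of_notMem (by simp only [mem_Ioi]; intro hh; exact h (by linarith))]
  rw [h1, integral_sub_right_eq_self ((Ioi (x - c)).indicator f) c,
    integral_indicator measurableSet_Ioi]

lemma integral_uprof_Ioi_neg {χ : ℝ} (hχ : 0 < χ) {z : ℝ} (hz : z < 0) :
    ∫ x in Ioi z, uprofPushed χ x = 1 - χ * z := by
  have hsplit : Ioi z = Ioc z 0 ∪ Ioi (0:ℝ) := (Ioc_union_Ioi_eq_Ioi hz.le).symm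
  have hint1 : IntegrableOn (uprofPushed χ) (Ioc z 0) :=
    ((uprof_cont χ).integrableOn_Ioc)
  have hint2 : IntegrableOn (uprofPushed χ) (Ioi (0:ℝ)) := by
    have := uprof_shift_integrableOn hχ 0 0
    simp only [sub_zero] at this
    exact this.mono_set Ioi_subset_Ici_self
  rw [hsplit, setIntegral_union (Ioc_disjoint_Ioi le_rfl) measurableSet_Ioi
    hint1 hint2]
  have h1 : ∫ x in Ioc z 0, uprofPushed χ x = χ * (0 - z) := by
    rw [setIntegral_congr_fun measurableSet_Ioc (g := fun _ => χ)
      (fun x hx => by rw [uprofPushed, if_neg (not_lt.2 hx.2)]),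
      setIntegral_const, Real.volume_real_Ioc, smul_eq_mul,
      max_eq_left (by linarith), mul_comm]
  rw [h1, integral_uprof_Ioi hχ le_rfl]
  simp
  ring

lemma ta_F {χ : ℝ} (hχ : 1 < χ) (c x : ℝ) :
    ta (∫ y in Ioi x, uprofPushed χ (y - c)) = if x < c then 1 else 0 := by
  have hχ0 : 0 < χ := by linarith
  rw [setIntegral_Ioi_comp_sub_right]
  by_cases h : x < c
  · rw [if_pos h, ta, if_pos]
    rw [integral_uprof_Ioi_neg hχ0 (by linarith)]
    nlinarith
  · rw [if_neg h, ta, if_neg]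
    rw [integral_uprof_Ioi hχ0 (by linarith [not_lt.1 h])]
    simp only [not_lt]
    exact Real.exp_le_one_iff.2 (neg_nonpos.2 (by nlinarith [not_lt.1 h]))

lemma tb_F {χ : ℝ} (hχ : 1 < χ) (c x : ℝ) :
    tb (∫ y in Ioi x, uprofPushed χ (y - c)) = if x < c then 0 else 1 := by
  rw [tb, ta_F hχ]
  by_cases h : x < c <;> simp [h]


lemma vanish (hφ : IsTestFun φ) {s x : ℝ}
    (h : (s, x) ∉ tsupport (fun p : ℝ × ℝ => φ p.1 p.2)) :
    φ s x = 0 ∧ pdt φ s x = 0 ∧ pdx φ s x = 0 ∧ pdxx φ s x = 0 := by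
  have hopen : IsOpen (tsupport (fun p : ℝ × ℝ => φ p.1 p.2))ᶜ :=
    (isClosed_tsupport _).isOpen_compl
  obtain ⟨u, v, hu, hv, hsu, hxv, huv⟩ := isOpen_prod_iff.1 hopen s x h
  have hzero : ∀ a ∈ u, ∀ b ∈ v, φ a b = 0 := by
    intro a ha b hb
    exact image_eq_zero_of_notMem_tsupport (f := fun p : ℝ × ℝ => φ p.1 p.2) (huv (mk_mem_prod ha hb))
  refine ⟨hzero s hsu x hxv, ?_, ?_, ?_⟩
  · have he : (fun τ => φ τ x) =ᶠ[nhds s] (fun _ => (0:ℝ)) := by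
      filter_upwards [hu.mem_nhds hsu] with τ hτ
      exact hzero τ hτ x hxv
    rw [pdt, he.deriv_eq, deriv_const]
  · have he : (φ s) =ᶠ[nhds x] (fun _ => (0:ℝ)) := by
      filter_upwards [hv.mem_nhds hxv] with y hy
      exact hzero s hsu y hy
    rw [pdx, he.deriv_eq, deriv_const]
  · have hd : ∀ b ∈ v, deriv (φ s) b = 0 := by
      intro b hb
      have he : (φ s) =ᶠ[nhds b] (fun _ => (0:ℝ)) := by
        filter_upwards [hv.mem_nhds hb] with y hy
        exact hzero s hsu y hy
      rw [he.deriv_eq, deriv_const]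
    have he : (deriv (φ s)) =ᶠ[nhds x] (fun _ => (0:ℝ)) := by
      filter_upwards [hv.mem_nhds hxv] with y hy
      exact hd y hy
    rw [pdxx, he.deriv_eq, deriv_const]

lemma support_bound (hφ : IsTestFun φ) :
    ∃ K > 0, ∀ p : ℝ × ℝ, p ∈ tsupport (fun p : ℝ × ℝ => φ p.1 p.2) →
      |p.1| ≤ K ∧ |p.2| ≤ K := by
  obtain ⟨r, hr⟩ := hφ.1.isBounded.subset_closedBall 0
  refine ⟨max r 1, lt_of_lt_of_le one_pos (le_max_right _ _), fun p hp => ?_⟩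
  have := hr hp
  rw [Metric.mem_closedBall, Prod.dist_eq] at this
  have h1 : dist p.1 0 ≤ r := le_trans (le_max_left _ _) this
  have h2 : dist p.2 0 ≤ r := le_trans (le_max_right _ _) this
  rw [Real.dist_eq, sub_zero] at h1 h2
  exact ⟨h1.trans (le_max_left _ _), h2.trans (le_max_left _ _)⟩

lemma hasDerivAt_slide (hφ : IsTestFun φ) (σ x s : ℝ) :
    HasDerivAt (fun τ => φ τ (x + σ * τ))
      (pdt φ s (x + σ * s) + σ * pdx φ s (x + σ * s)) s := by
  obtain ⟨hsupp, hcont, hdt, hpdtc, hdx, hpdxc, hdxx, hpdxxc⟩ := hφ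
  set X := x + σ * s with hX
  have hg2 : HasDerivAt (fun τ => φ s (x + σ * τ)) (σ * pdx φ s X) s := by
    have hlin : HasDerivAt (fun τ : ℝ => x + σ * τ) σ s := by
      simpa using ((hasDerivAt_id s).const_mul σ).const_add x
    have := ((hdx s) X).hasDerivAt.comp s hlin
    exact this.congr_deriv (by rw [pdx, mul_comm])
  rw [hasDerivAt_iff_tendsto_slope]
  have h2t := hasDerivAt_iff_tendsto_slope.1 hg2
  have h1t : Tendsto (fun τ => (φ τ (x + σ * τ) - φ s (x + σ * τ)) / (τ - s))
      (nhdsWithin s {s}ᶜ) (nhds (pdt φ s X)) := by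
    rw [Metric.tendsto_nhdsWithin_nhds]
    intro ε hε
    obtain ⟨δ, hδ0, hδ⟩ := Metric.continuousAt_iff.1 (hpdtc.continuousAt (x := (s, X))) ε hε
    refine ⟨δ / (1 + |σ|), by positivity, fun τ hτne hτd => ?_⟩
    have hne : τ ≠ s := hτne
    have key : ∀ c : ℝ, |c - s| ≤ |τ - s| →
        dist (pdt φ c (x + σ * τ)) (pdt φ s X) < ε := by
      intro c hc
      have h1 : dist ((c, x + σ * τ) : ℝ × ℝ) (s, X) < δ := by
        rw [Prod.dist_eq]
        apply max_lt
        · rw [Real.dist_eq]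
          calc |c - s| ≤ |τ - s| := hc
            _ = dist τ s := (Real.dist_eq τ s).symm
            _ < δ / (1 + |σ|) := hτd
            _ ≤ δ := by
                rw [div_le_iff₀ (by positivity)]
                nlinarith [abs_nonneg σ, hδ0]
        · rw [Real.dist_eq, hX]
          have : x + σ * τ - (x + σ * s) = σ * (τ - s) := by ring
          rw [this, abs_mul]
          calc |σ| * |τ - s| = |σ| * dist τ s := by rw [Real.dist_eq]
            _ < (1 + |σ|) * (δ / (1 + |σ|)) := by
                apply mul_lt_mul' (by linarith [abs_nonneg σ]) hτd (dist_nonneg) (by positivity)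
            _ = δ := by field_simp
      exact hδ h1
    rcases lt_or_gt_of_ne hne with hlt | hgt
    · -- τ < s
      obtain ⟨c, hc, hceq⟩ := exists_hasDerivAt_eq_slope (fun r => φ r (x + σ * τ))
        (fun r => pdt φ r (x + σ * τ)) hlt
        ((hcont.comp (continuous_id.prodMk continuous_const)).continuousOn)
        (fun r _ => ((hdt (x + σ * τ)) r).hasDerivAt)
      have heq : pdt φ c (x + σ * τ)
          = (φ τ (x + σ * τ) - φ s (x + σ * τ)) / (τ - s) := by
        rw [hceq]
        rw [div_eq_div_iff (by linarith [hc.1, hc.2] : s - τ ≠ 0) (sub_ne_zero.2 hne)]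
        ring
      rw [← heq]
      exact key c (by rw [abs_sub_comm c s, abs_of_pos (by linarith [hc.1, hc.2] : (0:ℝ) < s - c), abs_sub_comm τ s, abs_of_pos (by linarith : (0:ℝ) < s - τ)]; linarith [hc.1, hc.2])
    · -- s < τ
      obtain ⟨c, hc, hceq⟩ := exists_hasDerivAt_eq_slope (fun r => φ r (x + σ * τ))
        (fun r => pdt φ r (x + σ * τ)) hgt
        ((hcont.comp (continuous_id.prodMk continuous_const)).continuousOn)
        (fun r _ => ((hdt (x + σ * τ)) r).hasDerivAt)
      rw [← hceq]
      exact key c (by rw [abs_of_pos (by linarith [hc.1, hc.2] : (0:ℝ) < c - s), abs_of_pos (by linarith : (0:ℝ) < τ - s)]; linarith [hc.1, hc.2])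
  have := h1t.add h2t
  apply this.congr'
  filter_upwards [self_mem_nhdsWithin] with τ hτ
  have hne : τ - s ≠ 0 := sub_ne_zero.2 hτ
  rw [slope_def_field, slope_def_field]
  field_simp
  ring


/-- Continuity of the spatial sections of the test function data. -/
lemma sect_cont (hφ : IsTestFun φ) (s : ℝ) :
    Continuous (φ s) ∧ Continuous (pdx φ s) ∧ Continuous (pdxx φ s) ∧
      Continuous (pdt φ s) :=
  ⟨hφ.2.1.comp (continuous_const.prodMk continuous_id),
   hφ.2.2.2.2.2.1.comp (continuous_const.prodMk continuous_id),
   hφ.2.2.2.2.2.2.2.comp (continuous_const.prodMk continuous_id),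
   hφ.2.2.2.1.comp (continuous_const.prodMk continuous_id)⟩

/-- Any linear combination `c₁ φ + c₂ pdx + c₃ pdxx + c₄ pdt` (in section form) has
compact support and hence is integrable. -/
lemma sect_integrable (hφ : IsTestFun φ) (s : ℝ) (g : ℝ → ℝ)
    (hg : Continuous g)
    (hsupp : ∀ x, (s, x) ∉ tsupport (fun p : ℝ × ℝ => φ p.1 p.2) → g x = 0) :
    Integrable g := by
  obtain ⟨K, hK0, hK⟩ := support_bound hφ
  apply hg.integrable_of_hasCompactSupport
  apply HasCompactSupport.intro (isCompact_Icc (a := -K) (b := K))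
  intro x hx
  apply hsupp
  intro hmem
  exact hx ⟨by linarith [(hK _ hmem).2, abs_le.1 (hK _ hmem).2 |>.1],
    (abs_le.1 (hK _ hmem).2).2⟩

/-- FTC on the left half-line. -/
lemma left_ftc (hφ : IsTestFun φ) {χ : ℝ} (hχ : 0 < χ) (s a : ℝ) :
    ∫ x in Iio a, (χ * pdxx φ s x - pdx φ s x)
      = χ * pdx φ s a - φ s a := by
  obtain ⟨K, hK0, hK⟩ := support_bound hφ
  have hcont := sect_cont hφ s
  rw [setIntegral_congr_set Iio_ae_eq_Iic]
  have hderiv : ∀ x ∈ Iic a, HasDerivAt (fun y => χ * pdx φ s y - φ s y)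
      (χ * pdxx φ s x - pdx φ s x) x := by
    intro x _
    have h1 : HasDerivAt (pdx φ s) (pdxx φ s x) x := (hφ.2.2.2.2.2.2.1 s x).hasDerivAt
    have h2 : HasDerivAt (φ s) (pdx φ s x) x := (hφ.2.2.2.2.1 s x).hasDerivAt
    exact (h1.const_mul χ).sub h2
  have hint : IntegrableOn (fun x => χ * pdxx φ s x - pdx φ s x) (Iic a) := by
    apply Integrable.integrableOn
    apply sect_integrable hφ s _ (by continuity)
    intro x hx
    have := vanish hφ hx
    rw [this.2.2.1, this.2.2.2]; ring
  have htend : Tendsto (fun y => χ * pdx φ s y - φ s y) atBot (nhds 0) := by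
    apply Tendsto.congr' _ tendsto_const_nhds
    filter_upwards [eventually_le_atBot (-(K+1))] with y hy
    have hnot : (s, y) ∉ tsupport (fun p : ℝ × ℝ => φ p.1 p.2) := by
      intro hmem
      have := (hK _ hmem).2
      rw [abs_le] at this
      linarith [this.1]
    have := vanish hφ hnot
    rw [this.1, this.2.2.1]; ring
  rw [integral_Iic_of_hasDerivAt_of_tendsto' hderiv hint htend, sub_zero]

/-- FTC on the right half-line, with exponential weight. -/
lemma right_ftc (hφ : IsTestFun φ) {χ σ : ℝ} (hχ : 0 < χ) (hσ : σ * χ = χ^2 + 1)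
    (s a : ℝ) :
    ∫ x in Ioi a, (χ * Real.exp (-(χ * (x - a)))
        * (pdxx φ s x - σ * pdx φ s x + φ s x))
      = -(χ * pdx φ s a - φ s a) := by
  obtain ⟨K, hK0, hK⟩ := support_bound hφ
  set E : ℝ → ℝ := fun x => Real.exp (-(χ * (x - a))) with hE
  set HR : ℝ → ℝ := fun x => χ * (E x * (pdx φ s x + (χ - σ) * φ s x)) with hHR
  have hderiv : ∀ x ∈ Ici a, HasDerivAt HR
      (χ * E x * (pdxx φ s x - σ * pdx φ s x + φ s x)) x := by
    intro x _
    have hEd : HasDerivAt E (-χ * E x) x := by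
      have h1 : HasDerivAt (fun y : ℝ => -(χ * (y - a))) (-χ) x := by
        exact ((((hasDerivAt_id x).sub_const a).const_mul χ).neg).congr_deriv (by simp)
      simpa [hE, mul_comm] using h1.exp
    have h1 : HasDerivAt (pdx φ s) (pdxx φ s x) x := (hφ.2.2.2.2.2.2.1 s x).hasDerivAt
    have h2 : HasDerivAt (φ s) (pdx φ s x) x := (hφ.2.2.2.2.1 s x).hasDerivAt
    have hgd : HasDerivAt (fun y => pdx φ s y + (χ - σ) * φ s y)
        (pdxx φ s x + (χ - σ) * pdx φ s x) x := h1.add (h2.const_mul _)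
    have := (hEd.mul hgd).const_mul χ
    refine this.congr_deriv ?_
    have hcs : χ * (χ - σ) = χ^2 - σ * χ := by ring
    linear_combination (χ * E x * φ s x) * hσ
  obtain ⟨hc0, hc1, hc2, hc3⟩ := sect_cont hφ s
  have hgc : Continuous (fun x => pdxx φ s x - σ * pdx φ s x + φ s x) := by
    exact
    (hc2.sub (continuous_const.mul hc1)).add hc0
  have hg : Integrable (fun x => pdxx φ s x - σ * pdx φ s x + φ s x) := by
    apply sect_integrable hφ s _ hgc
    intro x hx
    have := vanish hφ hx
    rw [this.1, this.2.2.1, this.2.2.2]; ring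
  have hEc : Continuous E := by
    rw [hE]
    exact ((continuous_const.mul (continuous_id.sub continuous_const)).neg).rexp
  have hint : IntegrableOn (fun x => χ * E x * (pdxx φ s x - σ * pdx φ s x + φ s x))
      (Ioi a) := by
    apply Integrable.mono' (((hg.const_mul χ).abs).integrableOn (s := Ioi a))
    · exact ((continuous_const.mul hEc).mul hgc).aestronglyMeasurable.restrict
    · filter_upwards [ae_restrict_mem measurableSet_Ioi] with x hx
      have hE1 : E x ≤ 1 := by
        rw [hE]
        apply Real.exp_le_one_iff.2
        simp only [neg_nonpos]
        have : (0:ℝ) ≤ x - a := by simp only [mem_Ioi] at hx; linarith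
        positivity
      have hE0 : 0 ≤ E x := (Real.exp_pos _).le
      rw [Real.norm_eq_abs, abs_mul, abs_mul, abs_of_nonneg hE0, abs_mul χ]
      have h0 : 0 ≤ |pdxx φ s x - σ * pdx φ s x + φ s x| := abs_nonneg _
      have h2 := mul_le_mul_of_nonneg_right
        (mul_le_mul_of_nonneg_left hE1 (abs_nonneg χ)) h0
      calc |χ| * E x * |pdxx φ s x - σ * pdx φ s x + φ s x|
          ≤ |χ| * 1 * |pdxx φ s x - σ * pdx φ s x + φ s x| := h2
        _ = |χ| * |pdxx φ s x - σ * pdx φ s x + φ s x| := by ring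
  obtain ⟨K, hK0, hK⟩ := support_bound hφ
  have htend : Tendsto HR atTop (nhds 0) := by
    apply Tendsto.congr' _ tendsto_const_nhds
    filter_upwards [eventually_ge_atTop (K+1)] with y hy
    have hnot : (s, y) ∉ tsupport (fun p : ℝ × ℝ => φ p.1 p.2) := by
      intro hmem
      have := (hK _ hmem).2
      rw [abs_le] at this
      linarith [this.2]
    have := vanish hφ hnot
    rw [hHR]
    simp only
    rw [this.1, this.2.2.1]; ring
  have hmain := integral_Ioi_of_hasDerivAt_of_tendsto' hderiv hint htend
  have hEa : E a = 1 := by rw [hE]; simp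
  rw [hmain, hHR]
  simp only [hEa]
  linear_combination (φ s a) * hσ

lemma w_eq_exp {χ : ℝ} {a x : ℝ} (hx : a ≤ x) :
    uprofPushed χ (x - a) = χ * Real.exp (-(χ * (x - a))) := by
  rcases lt_or_eq_of_le hx with h | h
  · rw [uprofPushed, if_pos (by linarith)]
  · rw [uprofPushed, if_neg (by rw [← h]; simp), ← h]
    simp

lemma w_eq_const {χ : ℝ} {a x : ℝ} (hx : x < a) :
    uprofPushed χ (x - a) = χ := by
  rw [uprofPushed, if_neg (by linarith)]

variable {φ : ℝ → ℝ → ℝ}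

lemma spatial {χ σ : ℝ} (hχ : 1 < χ) (hσ : σ * χ = χ^2 + 1) (hφ : IsTestFun φ)
    (s a : ℝ) :
    (∫ x, (uprofPushed χ (x - a) * pdt φ s x + uprofPushed χ (x - a) * pdxx φ s x
      + χ * ta (∫ y in Ioi x, uprofPushed χ (y - a)) * uprofPushed χ (x - a) * pdx φ s x
      + tb (∫ y in Ioi x, uprofPushed χ (y - a)) * uprofPushed χ (x - a) * φ s x))
    = ∫ x, (pdt φ s x + σ * pdx φ s x) * uprofPushed χ (x - a) := by
  have hχ0 : (0:ℝ) < χ := by linarith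
  obtain ⟨hc0, hc1, hc2, hc3⟩ := sect_cont hφ s
  have hwc : Continuous (fun x => uprofPushed χ (x - a)) :=
    (uprof_cont χ).comp (continuous_id.sub continuous_const)
  set KL : ℝ → ℝ := fun x => χ * pdxx φ s x - pdx φ s x with hKL
  set KR : ℝ → ℝ := fun x =>
    χ * Real.exp (-(χ * (x - a))) * (pdxx φ s x - σ * pdx φ s x + φ s x) with hKR
  set Kf : ℝ → ℝ := fun x => if x < a then KL x else KR x with hKf
  -- pointwise identity
  have hpt : ∀ x, uprofPushed χ (x - a) * pdt φ s x + uprofPushed χ (x - a) * pdxx φ s x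
      + χ * ta (∫ y in Ioi x, uprofPushed χ (y - a)) * uprofPushed χ (x - a) * pdx φ s x
      + tb (∫ y in Ioi x, uprofPushed χ (y - a)) * uprofPushed χ (x - a) * φ s x
      = (pdt φ s x + σ * pdx φ s x) * uprofPushed χ (x - a) + Kf x := by
    intro x
    rw [ta_F hχ, tb_F hχ, hKf]
    by_cases h : x < a
    · simp only [if_pos h]
      rw [w_eq_const h, hKL]
      linear_combination (-(pdx φ s x)) * hσ
    · simp only [if_neg h]
      rw [w_eq_exp (not_lt.1 h), hKR]
      ring
  -- integrability
  have hKLint : Integrable KL := by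
    apply sect_integrable hφ s _ (by exact (continuous_const.mul hc2).sub hc1)
    intro x hx
    have := vanish hφ hx
    rw [hKL]; simp only; rw [this.2.2.1, this.2.2.2]; ring
  have hKRint : Integrable KR := by
    apply sect_integrable hφ s _
    · rw [hKR]
      exact (continuous_const.mul
        ((continuous_const.mul (continuous_id.sub continuous_const)).neg.rexp)).mul
        ((hc2.sub (continuous_const.mul hc1)).add hc0)
    · intro x hx
      have := vanish hφ hx
      rw [hKR]; simp only; rw [this.1, this.2.2.1, this.2.2.2]; ring
  have hIio : IntegrableOn Kf (Iio a) := by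
    apply (hKLint.integrableOn (s := Iio a)).congr_fun _ measurableSet_Iio
    intro x hx
    rw [hKf]; simp only [if_pos (mem_Iio.1 hx)]
  have hIci : IntegrableOn Kf (Ici a) := by
    apply (hKRint.integrableOn (s := Ici a)).congr_fun _ measurableSet_Ici
    intro x hx
    rw [hKf]; simp only [if_neg (not_lt.2 (mem_Ici.1 hx))]
  have hKfint : Integrable Kf := by
    have := hIio.union hIci
    rwa [Iio_union_Ici, integrableOn_univ] at this
  have hRint : Integrable (fun x => (pdt φ s x + σ * pdx φ s x) * uprofPushed χ (x - a)) := by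
    apply sect_integrable hφ s _ (by exact (hc3.add (continuous_const.mul hc1)).mul hwc)
    intro x hx
    have := vanish hφ hx
    rw [this.2.1, this.2.2.1]; ring
  -- ∫ Kf = 0
  have hKf0 : ∫ x, Kf x = 0 := by
    rw [← intervalIntegral.integral_Iio_add_Ici hIio hIci]
    have h1 : ∫ x in Iio a, Kf x = χ * pdx φ s a - φ s a := by
      have e1 : ∫ x in Iio a, Kf x = ∫ x in Iio a, (χ * pdxx φ s x - pdx φ s x) :=
        setIntegral_congr_fun measurableSet_Iio
          (fun x hx => by simp only [hKf, hKL, if_pos (mem_Iio.1 hx)])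
      rw [e1]
      exact left_ftc hφ hχ0 s a
    have h2 : ∫ x in Ici a, Kf x = -(χ * pdx φ s a - φ s a) := by
      have e2 : ∫ x in Ici a, Kf x
          = ∫ x in Ici a, (χ * Real.exp (-(χ * (x - a))) * (pdxx φ s x - σ * pdx φ s x + φ s x)) :=
        setIntegral_congr_fun measurableSet_Ici
          (fun x hx => by simp only [hKf, hKR, if_neg (not_lt.2 (mem_Ici.1 hx))])
      rw [e2, setIntegral_congr_set (Ioi_ae_eq_Ici).symm]
      exact right_ftc hφ hχ0 hσ s a
    rw [h1, h2]; ring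
  calc (∫ x, (uprofPushed χ (x - a) * pdt φ s x + uprofPushed χ (x - a) * pdxx φ s x
      + χ * ta (∫ y in Ioi x, uprofPushed χ (y - a)) * uprofPushed χ (x - a) * pdx φ s x
      + tb (∫ y in Ioi x, uprofPushed χ (y - a)) * uprofPushed χ (x - a) * φ s x))
      = ∫ x, ((pdt φ s x + σ * pdx φ s x) * uprofPushed χ (x - a) + Kf x) := by
        apply integral_congr_ae
        filter_upwards with x
        exact hpt x
    _ = (∫ x, (pdt φ s x + σ * pdx φ s x) * uprofPushed χ (x - a)) + ∫ x, Kf x :=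
        integral_add hRint hKfint
    _ = ∫ x, (pdt φ s x + σ * pdx φ s x) * uprofPushed χ (x - a) := by rw [hKf0, add_zero]


/-- Bound for `pdt` in joint form. -/
lemma pdt_bound (hφ : IsTestFun φ) :
    ∃ C ≥ 0, ∀ s x, |pdt φ s x| ≤ C := by
  have hcs : HasCompactSupport (fun p : ℝ × ℝ => pdt φ p.1 p.2) :=
    HasCompactSupport.intro hφ.1 (fun p hp => (vanish hφ (x := p.2) (s := p.1)
      (by simpa using hp)).2.1)
  obtain ⟨C, hC⟩ := hcs.exists_bound_of_continuous hφ.2.2.2.1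
  exact ⟨C, le_trans (norm_nonneg _) (hC (0,0)), fun s x => hC (s, x)⟩

lemma pdx_bound (hφ : IsTestFun φ) :
    ∃ C ≥ 0, ∀ s x, |pdx φ s x| ≤ C := by
  have hcs : HasCompactSupport (fun p : ℝ × ℝ => pdx φ p.1 p.2) :=
    HasCompactSupport.intro hφ.1 (fun p hp => (vanish hφ (x := p.2) (s := p.1)
      (by simpa using hp)).2.2.1)
  obtain ⟨C, hC⟩ := hcs.exists_bound_of_continuous hφ.2.2.2.2.2.1
  exact ⟨C, le_trans (norm_nonneg _) (hC (0,0)), fun s x => hC (s, x)⟩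

lemma pdxx_bound (hφ : IsTestFun φ) :
    ∃ C ≥ 0, ∀ s x, |pdxx φ s x| ≤ C := by
  have hcs : HasCompactSupport (fun p : ℝ × ℝ => pdxx φ p.1 p.2) :=
    HasCompactSupport.intro hφ.1 (fun p hp => (vanish hφ (x := p.2) (s := p.1)
      (by simpa using hp)).2.2.2)
  obtain ⟨C, hC⟩ := hcs.exists_bound_of_continuous hφ.2.2.2.2.2.2.2
  exact ⟨C, le_trans (norm_nonneg _) (hC (0,0)), fun s x => hC (s, x)⟩

lemma phi_bound (hφ : IsTestFun φ) :
    ∃ C ≥ 0, ∀ s x, |φ s x| ≤ C := by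
  obtain ⟨C, hC⟩ := hφ.1.exists_bound_of_continuous hφ.2.1
  exact ⟨C, le_trans (norm_nonneg _) (hC (0,0)), fun s x => hC (s, x)⟩

/-- Differentiation of the moving-frame integral. -/
lemma G_hasDerivAt {χ : ℝ} (hχ : 0 < χ) (hφ : IsTestFun φ) (σ : ℝ) (s₀ : ℝ) :
    HasDerivAt (fun s => ∫ x, φ s x * uprofPushed χ (x - σ * s))
      (∫ x, (pdt φ s₀ x + σ * pdx φ s₀ x) * uprofPushed χ (x - σ * s₀)) s₀ := by
  obtain ⟨K, hK0, hK⟩ := support_bound hφ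
  obtain ⟨Ct, hCt0, hCt⟩ := pdt_bound hφ
  obtain ⟨Cx, hCx0, hCx⟩ := pdx_bound hφ
  set F : ℝ → ℝ → ℝ := fun s y => φ s (y + σ * s) * uprofPushed χ y with hF
  set F' : ℝ → ℝ → ℝ := fun s y =>
    (pdt φ s (y + σ * s) + σ * pdx φ s (y + σ * s)) * uprofPushed χ y with hF'
  have hshift : ∀ (g : ℝ → ℝ) (c : ℝ), (∫ y, g (y + c)) = ∫ x, g x := fun g c =>
    integral_add_right_eq_self g c
  have hFeq : ∀ s, (∫ x, φ s x * uprofPushed χ (x - σ * s)) = ∫ y, F s y := by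
    intro s
    rw [← hshift (fun x => φ s x * uprofPushed χ (x - σ * s)) (σ * s)]
    congr 1
    funext y
    rw [hF]
    simp only [add_sub_cancel_right]
  have hF'eq : (∫ x, (pdt φ s₀ x + σ * pdx φ s₀ x) * uprofPushed χ (x - σ * s₀))
      = ∫ y, F' s₀ y := by
    rw [← hshift (fun x => (pdt φ s₀ x + σ * pdx φ s₀ x) * uprofPushed χ (x - σ * s₀)) (σ * s₀)]
    congr 1
    funext y
    rw [hF']
    simp only [add_sub_cancel_right]
  set M : ℝ := K + |σ| * (|s₀| + 1) + 1 with hM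
  set B : ℝ := (Ct + |σ| * Cx) * χ with hB
  have key := hasDerivAt_integral_of_dominated_loc_of_deriv_le
    (F := F) (F' := F') (x₀ := s₀) (s := Metric.ball s₀ 1) (μ := volume)
    (bound := (Metric.closedBall (0:ℝ) M).indicator (fun _ => B)) (Metric.ball_mem_nhds s₀ one_pos)
    ?_ ?_ ?_ ?_ ?_ ?_
  · rw [show (fun s => ∫ x, φ s x * uprofPushed χ (x - σ * s)) = fun s => ∫ y, F s y
      from funext hFeq, hF'eq]
    exact key.2
  · filter_upwards with s
    exact ((hφ.2.1.comp (continuous_const.prodMk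
      ((continuous_id.add continuous_const)))).mul (uprof_cont χ)).aestronglyMeasurable
  · -- integrability of F s₀
    apply Continuous.integrable_of_hasCompactSupport
    · exact (hφ.2.1.comp (continuous_const.prodMk
        ((continuous_id.add continuous_const)))).mul (uprof_cont χ)
    · apply HasCompactSupport.intro (isCompact_closedBall (0:ℝ) (K + |σ| * |s₀|))
      intro y hy
      rw [hF]
      simp only
      have hz : φ s₀ (y + σ * s₀) = 0 := by
        by_contra hne
        have hmem : (s₀, y + σ * s₀) ∈ tsupport (fun p : ℝ × ℝ => φ p.1 p.2) :=
          subset_tsupport _ hne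
        have := (hK _ hmem).2
        simp only [Metric.mem_closedBall, Real.dist_eq, sub_zero, not_le] at hy
        have h1 : |y| ≤ |y + σ * s₀| + |σ * s₀| := by
          calc |y| = |(y + σ * s₀) + -(σ * s₀)| := by ring_nf
            _ ≤ |y + σ * s₀| + |-(σ * s₀)| := abs_add_le _ _
            _ = |y + σ * s₀| + |σ * s₀| := by rw [abs_neg]
        rw [abs_mul] at h1
        nlinarith [this, h1]
      rw [hz, zero_mul]
  · exact (((hφ.2.2.2.1.comp (continuous_const.prodMk
      (continuous_id.add continuous_const))).add
      (continuous_const.mul (hφ.2.2.2.2.2.1.comp (continuous_const.prodMk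
      (continuous_id.add continuous_const))))).mul (uprof_cont χ)).aestronglyMeasurable
  · -- bound
    filter_upwards with y
    intro s hs
    by_cases hy : y ∈ Metric.closedBall (0:ℝ) M
    · rw [indicator_of_mem hy]
      rw [hF', Real.norm_eq_abs]
      simp only
      rw [abs_mul, hB]
      apply mul_le_mul _ (uprof_abs_le hχ.le y) (abs_nonneg _) (by positivity)
      calc |pdt φ s (y + σ * s) + σ * pdx φ s (y + σ * s)|
          ≤ |pdt φ s (y + σ * s)| + |σ * pdx φ s (y + σ * s)| := abs_add_le _ _
        _ ≤ Ct + |σ| * Cx := by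
            rw [abs_mul]
            have h2 := hCx s (y + σ * s)
            have h3 := hCt s (y + σ * s)
            have := mul_le_mul_of_nonneg_left h2 (abs_nonneg σ)
            linarith
    · rw [indicator_of_notMem hy]
      have hz : (s, y + σ * s) ∉ tsupport (fun p : ℝ × ℝ => φ p.1 p.2) := by
        intro hmem
        have h2 := (hK _ hmem).2
        simp only [Metric.mem_closedBall, Real.dist_eq, sub_zero, not_le] at hy
        have hsb : |s| ≤ |s₀| + 1 := by
          have := mem_ball_iff_norm.1 hs
          rw [Real.norm_eq_abs] at this
          calc |s| = |s₀ + (s - s₀)| := by ring_nf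
            _ ≤ |s₀| + |s - s₀| := abs_add_le _ _
            _ ≤ |s₀| + 1 := by linarith
        have h1 : |y| ≤ |y + σ * s| + |σ| * |s| := by
          calc |y| = |(y + σ * s) + -(σ * s)| := by ring_nf
            _ ≤ |y + σ * s| + |-(σ * s)| := abs_add_le _ _
            _ = |y + σ * s| + |σ| * |s| := by rw [abs_neg, abs_mul]
        have h4 : |σ| * |s| ≤ |σ| * (|s₀| + 1) := mul_le_mul_of_nonneg_left hsb (abs_nonneg σ)
        rw [hM] at hy
        nlinarith
      have := vanish hφ hz
      rw [hF', Real.norm_eq_abs]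
      simp only
      rw [this.2.1, this.2.2.1]
      simp
  · -- integrability of bound
    rw [integrable_indicator_iff measurableSet_closedBall]
    apply (integrableOn_const_iff (C := B) (by finiteness)).2
    right
    exact measure_closedBall_lt_top
  · -- differentiability
    filter_upwards with y
    intro s hs
    have h := (hasDerivAt_slide hφ σ y s).mul_const (uprofPushed χ y)
    exact h


def Iw (χ σ : ℝ) (φ : ℝ → ℝ → ℝ) (s x : ℝ) : ℝ :=
  uprofPushed χ (x - σ * s) * pdt φ s x + uprofPushed χ (x - σ * s) * pdxx φ s x
    + χ * ta (∫ y in Ioi x, uprofPushed χ (y - σ * s)) * uprofPushed χ (x - σ * s) * pdx φ s x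
    + tb (∫ y in Ioi x, uprofPushed χ (y - σ * s)) * uprofPushed χ (x - σ * s) * φ s x

lemma weak_main {χ σ : ℝ} (hχ : 1 < χ) (hσ : σ * χ = χ^2 + 1) (hφ : IsTestFun φ)
    {t : ℝ} (ht : 0 ≤ t) :
    ((∫ x : ℝ, φ t x * uprofPushed χ (x - σ * t))
        - ∫ x : ℝ, φ 0 x * uprofPushed χ (x - σ * 0))
    = ∫ x : ℝ, ∫ s in (0:ℝ)..t, Iw χ σ φ s x := by
  have hχ0 : (0:ℝ) < χ := by linarith
  set μ : Measure ℝ := volume.restrict (Ioc 0 t) with hμ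
  obtain ⟨K, hK0, hK⟩ := support_bound hφ
  obtain ⟨Ct, hCt0, hCt⟩ := pdt_bound hφ
  obtain ⟨Cx, hCx0, hCx⟩ := pdx_bound hφ
  obtain ⟨Cxx, hCxx0, hCxx⟩ := pdxx_bound hφ
  obtain ⟨Cp, hCp0, hCp⟩ := phi_bound hφ
  set S : Set (ℝ × ℝ) := tsupport (fun p : ℝ × ℝ => φ p.1 p.2) with hS
  set C₀ : ℝ := χ * Ct + χ * Cxx + χ * (χ * Cx) + χ * Cp with hC₀
  have hup : Continuous (fun p : ℝ × ℝ => uprofPushed χ (p.2 - σ * p.1)) :=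
    (uprof_cont χ).comp (continuous_snd.sub (continuous_const.mul continuous_fst))
  have hAeq : (fun p : ℝ × ℝ => ta (∫ y in Ioi p.2, uprofPushed χ (y - σ * p.1)))
      = fun p : ℝ × ℝ => if p.2 < σ * p.1 then (1:ℝ) else 0 :=
    funext fun p => ta_F hχ (σ * p.1) p.2
  have hBeq : (fun p : ℝ × ℝ => tb (∫ y in Ioi p.2, uprofPushed χ (y - σ * p.1)))
      = fun p : ℝ × ℝ => if p.2 < σ * p.1 then (0:ℝ) else 1 :=
    funext fun p => tb_F hχ (σ * p.1) p.2
  have hsetm : MeasurableSet {p : ℝ × ℝ | p.2 < σ * p.1} :=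
    measurableSet_lt measurable_snd (measurable_const.mul measurable_fst)
  have hAm : Measurable (fun p : ℝ × ℝ => ta (∫ y in Ioi p.2, uprofPushed χ (y - σ * p.1))) := by
    rw [hAeq]; exact Measurable.ite hsetm measurable_const measurable_const
  have hBm : Measurable (fun p : ℝ × ℝ => tb (∫ y in Ioi p.2, uprofPushed χ (y - σ * p.1))) := by
    rw [hBeq]; exact Measurable.ite hsetm measurable_const measurable_const
  have hJuneq : Function.uncurry (Iw χ σ φ) = fun p : ℝ × ℝ =>
      uprofPushed χ (p.2 - σ * p.1) * pdt φ p.1 p.2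
      + uprofPushed χ (p.2 - σ * p.1) * pdxx φ p.1 p.2
      + χ * ta (∫ y in Ioi p.2, uprofPushed χ (y - σ * p.1))
          * uprofPushed χ (p.2 - σ * p.1) * pdx φ p.1 p.2
      + tb (∫ y in Ioi p.2, uprofPushed χ (y - σ * p.1))
          * uprofPushed χ (p.2 - σ * p.1) * φ p.1 p.2 := rfl
  have hJmeas : AEStronglyMeasurable (Function.uncurry (Iw χ σ φ)) (μ.prod volume) := by
    rw [hJuneq]
    refine Measurable.aestronglyMeasurable ?_
    exact (((hup.measurable.mul hφ.2.2.2.1.measurable).add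
      (hup.measurable.mul hφ.2.2.2.2.2.2.2.measurable)).add
      (((measurable_const.mul hAm).mul hup.measurable).mul hφ.2.2.2.2.2.1.measurable)).add
      ((hBm.mul hup.measurable).mul hφ.2.1.measurable)
  have hbint : Integrable (S.indicator fun _ => C₀) (μ.prod volume) := by
    rw [integrable_indicator_iff (isClosed_tsupport _).measurableSet]
    apply (integrableOn_const_iff (C := C₀) (by finiteness)).2
    right
    have hsub : S ⊆ Icc (-K) K ×ˢ Icc (-K) K := by
      intro p hp
      exact ⟨mem_Icc.2 (abs_le.1 (hK p hp).1), mem_Icc.2 (abs_le.1 (hK p hp).2)⟩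
    calc (μ.prod volume) S ≤ (μ.prod volume) (Icc (-K) K ×ˢ Icc (-K) K) := measure_mono hsub
      _ = μ (Icc (-K) K) * volume (Icc (-K) K) := Measure.prod_prod _ _
      _ < ⊤ := by
          apply ENNReal.mul_lt_top
          · rw [hμ, Measure.restrict_apply measurableSet_Icc]
            exact lt_of_le_of_lt (measure_mono inter_subset_left)
              (by rw [Real.volume_Icc]; exact ENNReal.ofReal_lt_top)
          · rw [Real.volume_Icc]; exact ENNReal.ofReal_lt_top
  have hta1 : ∀ s x : ℝ, |ta (∫ y in Ioi x, uprofPushed χ (y - σ * s))| ≤ 1 := by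
    intro s x
    rw [ta_F hχ]
    split <;> simp
  have htb1 : ∀ s x : ℝ, |tb (∫ y in Ioi x, uprofPushed χ (y - σ * s))| ≤ 1 := by
    intro s x
    rw [tb_F hχ]
    split <;> simp
  have hbound : ∀ p : ℝ × ℝ, ‖Function.uncurry (Iw χ σ φ) p‖
      ≤ S.indicator (fun _ => C₀) p := by
    rintro ⟨s, x⟩
    by_cases hp : (s, x) ∈ S
    · rw [indicator_of_mem hp]
      rw [Real.norm_eq_abs]
      have e1 : |uprofPushed χ (x - σ * s) * pdt φ s x| ≤ χ * Ct := by
        rw [abs_mul]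
        exact mul_le_mul (uprof_abs_le hχ0.le _) (hCt s x) (abs_nonneg _) hχ0.le
      have e2 : |uprofPushed χ (x - σ * s) * pdxx φ s x| ≤ χ * Cxx := by
        rw [abs_mul]
        exact mul_le_mul (uprof_abs_le hχ0.le _) (hCxx s x) (abs_nonneg _) hχ0.le
      have e3 : |χ * ta (∫ y in Ioi x, uprofPushed χ (y - σ * s))
          * uprofPushed χ (x - σ * s) * pdx φ s x| ≤ χ * (χ * Cx) := by
        rw [abs_mul, abs_mul, abs_mul, abs_of_pos hχ0]
        have i1 : χ * |ta (∫ y in Ioi x, uprofPushed χ (y - σ * s))| ≤ χ * 1 :=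
          mul_le_mul_of_nonneg_left (hta1 s x) hχ0.le
        have i2 : χ * |ta (∫ y in Ioi x, uprofPushed χ (y - σ * s))|
            * |uprofPushed χ (x - σ * s)| ≤ (χ * 1) * χ :=
          mul_le_mul i1 (uprof_abs_le hχ0.le _) (abs_nonneg _) (by positivity)
        calc χ * |ta (∫ y in Ioi x, uprofPushed χ (y - σ * s))|
              * |uprofPushed χ (x - σ * s)| * |pdx φ s x| ≤ ((χ * 1) * χ) * Cx :=
            mul_le_mul i2 (hCx s x) (abs_nonneg _) (by positivity)
          _ = χ * (χ * Cx) := by ring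
      have e4 : |tb (∫ y in Ioi x, uprofPushed χ (y - σ * s))
          * uprofPushed χ (x - σ * s) * φ s x| ≤ χ * Cp := by
        rw [abs_mul, abs_mul]
        have i1 : |tb (∫ y in Ioi x, uprofPushed χ (y - σ * s))|
            * |uprofPushed χ (x - σ * s)| ≤ 1 * χ :=
          mul_le_mul (htb1 s x) (uprof_abs_le hχ0.le _) (abs_nonneg _) zero_le_one
        calc |tb (∫ y in Ioi x, uprofPushed χ (y - σ * s))|
              * |uprofPushed χ (x - σ * s)| * |φ s x| ≤ (1 * χ) * Cp :=
            mul_le_mul i1 (hCp s x) (abs_nonneg _) (by positivity)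
          _ = χ * Cp := by ring
      have habs : |Function.uncurry (Iw χ σ φ) (s, x)|
          ≤ |uprofPushed χ (x - σ * s) * pdt φ s x|
            + |uprofPushed χ (x - σ * s) * pdxx φ s x|
            + |χ * ta (∫ y in Ioi x, uprofPushed χ (y - σ * s))
                * uprofPushed χ (x - σ * s) * pdx φ s x|
            + |tb (∫ y in Ioi x, uprofPushed χ (y - σ * s))
                * uprofPushed χ (x - σ * s) * φ s x| := by
        rw [show Function.uncurry (Iw χ σ φ) (s, x) = Iw χ σ φ s x from rfl, Iw]
        exact (abs_add_le _ _).trans (add_le_add_left ((abs_add_le _ _).trans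
          (add_le_add_left (abs_add_le _ _) _)) _)
      rw [hC₀]
      calc |Function.uncurry (Iw χ σ φ) (s, x)| ≤ _ := habs
        _ ≤ χ * Ct + χ * Cxx + χ * (χ * Cx) + χ * Cp := by linarith
    · rw [indicator_of_notMem hp]
      have hv := vanish hφ (s := s) (x := x) hp
      rw [show Function.uncurry (Iw χ σ φ) (s, x) = Iw χ σ φ s x from rfl, Iw,
        Real.norm_eq_abs, hv.1, hv.2.1, hv.2.2.1, hv.2.2.2]
      simp
  have hJ : Integrable (Function.uncurry (Iw χ σ φ)) (μ.prod volume) :=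
    Integrable.mono' hbint hJmeas (Eventually.of_forall hbound)
  have hDIeq : ∀ s, (∫ x, Iw χ σ φ s x)
      = ∫ x, (pdt φ s x + σ * pdx φ s x) * uprofPushed χ (x - σ * s) := by
    intro s
    rw [show (fun x => Iw χ σ φ s x) = fun x =>
      (uprofPushed χ (x - σ * s) * pdt φ s x + uprofPushed χ (x - σ * s) * pdxx φ s x
      + χ * ta (∫ y in Ioi x, uprofPushed χ (y - σ * s)) * uprofPushed χ (x - σ * s) * pdx φ s x
      + tb (∫ y in Ioi x, uprofPushed χ (y - σ * s)) * uprofPushed χ (x - σ * s) * φ s x)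
      from rfl]
    exact spatial hχ hσ hφ s (σ * s)
  have hIIint : IntervalIntegrable (fun s => ∫ x, Iw χ σ φ s x) volume 0 t := by
    rw [intervalIntegrable_iff_integrableOn_Ioc_of_le ht]
    exact hJ.integral_prod_left
  have hFTC : ∫ s in (0:ℝ)..t, (∫ x, Iw χ σ φ s x)
      = (∫ x, φ t x * uprofPushed χ (x - σ * t))
        - ∫ x, φ 0 x * uprofPushed χ (x - σ * 0) := by
    apply intervalIntegral.integral_eq_sub_of_hasDerivAt
    · intro s hs
      rw [hDIeq s]
      exact G_hasDerivAt hχ0 hφ σ s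
    · exact hIIint
  have hswap : ∫ s in Ioc (0:ℝ) t, (∫ x, Iw χ σ φ s x) = ∫ x, ∫ s in Ioc (0:ℝ) t, Iw χ σ φ s x :=
    integral_integral_swap hJ
  calc ((∫ x : ℝ, φ t x * uprofPushed χ (x - σ * t))
        - ∫ x : ℝ, φ 0 x * uprofPushed χ (x - σ * 0))
      = ∫ s in (0:ℝ)..t, (∫ x, Iw χ σ φ s x) := hFTC.symm
    _ = ∫ s in Ioc (0:ℝ) t, (∫ x, Iw χ σ φ s x) := intervalIntegral.integral_of_le ht
    _ = ∫ x, ∫ s in Ioc (0:ℝ) t, Iw χ σ φ s x := hswap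
    _ = ∫ x : ℝ, ∫ s in (0:ℝ)..t, Iw χ σ φ s x := by
        apply integral_congr_ae
        filter_upwards with x
        exact (intervalIntegral.integral_of_le ht).symm


lemma l1loc {χ σ : ℝ} (hχ : 0 < χ) (T : ℝ) :
    ∀ t₀ ∈ Icc (0:ℝ) T, ∀ R > (0:ℝ),
    Tendsto (fun t => ∫ x in (-R)..R, |uprofPushed χ (x - σ * t) - uprofPushed χ (x - σ * t₀)|)
      (nhdsWithin t₀ (Icc 0 T)) (nhds 0) := by
  intro t₀ ht₀ R hR
  have hRR : (-R : ℝ) ≤ R := by linarith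
  apply squeeze_zero (g := fun t => (R - (-R)) * (χ^2 * (|σ| * |t - t₀|)))
  · intro t
    exact intervalIntegral.integral_nonneg hRR (fun x _ => abs_nonneg _)
  · intro t
    have hle : ∀ x ∈ Icc (-R) R,
        |uprofPushed χ (x - σ * t) - uprofPushed χ (x - σ * t₀)|
          ≤ χ^2 * (|σ| * |t - t₀|) := by
      intro x _
      calc |uprofPushed χ (x - σ * t) - uprofPushed χ (x - σ * t₀)|
          ≤ χ^2 * |(x - σ * t) - (x - σ * t₀)| := uprof_lip hχ.le _ _
        _ = χ^2 * (|σ| * |t - t₀|) := by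
            rw [show (x - σ * t) - (x - σ * t₀) = σ * (t₀ - t) by ring, abs_mul,
              abs_sub_comm t₀ t]
    have h1 : IntervalIntegrable
        (fun x => |uprofPushed χ (x - σ * t) - uprofPushed χ (x - σ * t₀)|) volume (-R) R := by
      apply Continuous.intervalIntegrable
      exact (((uprof_cont χ).comp (continuous_id.sub continuous_const)).sub
        ((uprof_cont χ).comp (continuous_id.sub continuous_const))).abs
    have h2 := intervalIntegral.integral_mono_on hRR h1 intervalIntegrable_const hle
    calc ∫ x in (-R)..R, |uprofPushed χ (x - σ * t) - uprofPushed χ (x - σ * t₀)|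
        ≤ ∫ _x in (-R)..R, χ^2 * (|σ| * |t - t₀|) := h2
      _ = (R - (-R)) * (χ^2 * (|σ| * |t - t₀|)) := by
          rw [intervalIntegral.integral_const, smul_eq_mul]
  · have hcont : Continuous fun t : ℝ => (R - (-R)) * (χ^2 * (|σ| * |t - t₀|)) := by
      apply continuous_const.mul
      apply continuous_const.mul
      exact continuous_const.mul ((continuous_id.sub continuous_const).abs)
    have := (hcont.tendsto t₀).mono_left (nhdsWithin_le_nhds (s := Icc (0:ℝ) T))
    simpa using this


end PW

/-- For `χ > 1` and `σ* = χ + 1/χ`, the profile `u^{σ*}` is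
continuous, bounded, nonnegative, integrable on `[0,∞)` with `∫_0^∞ u^{σ*} = 1`,
and `u_t(x) = u^{σ*}(x − σ* t)` is a weak solution of the nonlinear equation
on `[0,T]` for every `T > 0`. -/
theorem pushed_traveling_wave
    (χ : ℝ) (hχ : 1 < χ) :
    Continuous (uprofPushed χ) ∧
    (∃ C : ℝ, ∀ z, |uprofPushed χ z| ≤ C) ∧
    (∀ z, 0 ≤ uprofPushed χ z) ∧
    IntegrableOn (uprofPushed χ) (Ici 0) ∧
    ((∫ z in Ioi (0:ℝ), uprofPushed χ z) = 1) ∧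
    (∀ T > (0:ℝ), IsWeakSolU χ T fun t x => uprofPushed χ (x - (χ + 1/χ) * t)) := by
  have hχ0 : (0:ℝ) < χ := by linarith
  have hσ : (χ + 1/χ) * χ = χ^2 + 1 := by field_simp
  refine ⟨PW.uprof_cont χ, ⟨χ, fun z => PW.uprof_abs_le hχ0.le z⟩,
    fun z => PW.uprof_nonneg hχ0.le z, ?_, ?_, ?_⟩
  · have := PW.uprof_shift_integrableOn hχ0 0 0
    simpa using this
  · have := PW.integral_uprof_Ioi hχ0 (z := 0) le_rfl
    simpa using this
  · intro T hT
    refine ⟨?_, ?_, ?_, ?_⟩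
    · intro t _
      exact ((PW.uprof_cont χ).comp (continuous_id.sub continuous_const)).locallyIntegrable
    · intro t _
      exact PW.uprof_shift_integrableOn hχ0 ((χ + 1/χ) * t) 0
    · exact PW.l1loc (σ := χ + 1/χ) hχ0 T
    · intro φ hφ t ht
      exact PW.weak_main hχ hσ hφ ht.1
end
end

section
/- Let χ > 1 and σ* := χ + 1/χ, let u^{σ*}(z) := χ e^{−χ z} for z > 0 and χ for z ≤ 0, and define β(z) := σ* − χ·𝟙{z<0} + 2 (u^{σ*})'(z)/u^{σ*}(z) for z ≠ 0; explicitly β(z) = 1/χ for z < 0 and β(z) = 1/χ − χ for z > 0. Define v_∞(z) := ((χ²−1)/χ³) e^{z/χ} for z ≤ 0 and v_∞(z) := ((χ²−1)/χ³) e^{−(χ−1/χ) z} for z > 0. Then v_∞ is a probability density: ∫_ℝ v_∞(z) dz = 1; and v_∞ is a distributional stationary solution of the Fokker–Planck equation ∂_s v − ∂_z² v + ∂_z(β v) = 0, i.e. for every φ ∈ C_c²(ℝ): ∫_ℝ v_∞(z) φ''(z) dz + ∫_ℝ β(z) v_∞(z) φ'(z) dz = 0. -/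
open MeasureTheory Set Filter

noncomputable section

/-- The ancestral-lineage drift in the pushed regime `χ > 1`:
`β(z) = 1/χ` for `z < 0` and `β(z) = 1/χ − χ` for `z > 0`. -/
def betaPushed (χ : ℝ) (z : ℝ) : ℝ :=
  if z < 0 then 1/χ else 1/χ - χ

/-- The equilibrium ancestral-lineage density in the pushed regime:
`v_∞(z) = ((χ²−1)/χ³) e^{z/χ}` for `z ≤ 0` and `((χ²−1)/χ³) e^{−(χ−1/χ)z}` for `z > 0`. -/
def vinfPushed (χ : ℝ) (z : ℝ) : ℝ :=
  if z ≤ 0 then ((χ^2 - 1)/χ^3) * Real.exp (z/χ)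
  else ((χ^2 - 1)/χ^3) * Real.exp (-(χ - 1/χ) * z)

/-- Integrability of `exp (b z)` on `(-∞, c]` for `b > 0`. -/
lemma expIic_integrable {b : ℝ} (hb : 0 < b) (c : ℝ) :
    IntegrableOn (fun z => Real.exp (b*z)) (Iic c) := by
  have h : Integrable ((Iic (b*c)).indicator Real.exp) :=
    (integrable_indicator_iff measurableSet_Iic).2 (integrableOn_exp_Iic _)
  have h2 := (integrable_comp_mul_left_iff ((Iic (b*c)).indicator Real.exp) hb.ne').2 h
  rw [← integrable_indicator_iff measurableSet_Iic]
  convert h2 using 1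
  · rfl
  funext x
  by_cases hx : x ≤ c
  · simp [indicator, hx, (mul_le_mul_iff_right₀ hb).2 hx]
  · have : ¬ b*x ≤ b*c := by rw [mul_le_mul_iff_right₀ hb]; exact hx
    simp [indicator, hx, this]

lemma compactSupport_eventually_atBot {f : ℝ → ℝ} (hf : HasCompactSupport f) :
    ∀ᶠ z in atBot, f z = 0 := by
  have h1 : (tsupport f)ᶜ ∈ Filter.cocompact ℝ :=
    Filter.mem_cocompact.2 ⟨tsupport f, hf, subset_rfl⟩
  rw [cocompact_eq_atBot_atTop, Filter.mem_sup] at h1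
  filter_upwards [h1.1] with z hz using image_eq_zero_of_notMem_tsupport hz

lemma compactSupport_eventually_atTop {f : ℝ → ℝ} (hf : HasCompactSupport f) :
    ∀ᶠ z in atTop, f z = 0 := by
  have h1 : (tsupport f)ᶜ ∈ Filter.cocompact ℝ :=
    Filter.mem_cocompact.2 ⟨tsupport f, hf, subset_rfl⟩
  rw [cocompact_eq_atBot_atTop, Filter.mem_sup] at h1
  filter_upwards [h1.2] with z hz using image_eq_zero_of_notMem_tsupport hz

/-- In the pushed regime `χ > 1` with `σ* = χ + 1/χ`:
the drift `β` agrees with `σ* − χ𝟙{z<0} + 2(u^{σ*})'/u^{σ*}` away from `0`,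
`v_∞` is a probability density, and `v_∞` is a distributional stationary solution
of the Fokker–Planck equation `∂_s v − ∂_z² v + ∂_z(β v) = 0`. -/
theorem pushed_ancestral_equilibrium
    (χ : ℝ) (hχ : 1 < χ) :
    (∀ z : ℝ, z ≠ 0 →
      betaPushed χ z = (χ + 1/χ) - χ * (if z < 0 then 1 else 0)
        + 2 * deriv (uprofPushed χ) z / uprofPushed χ z) ∧
    ((∫ z : ℝ, vinfPushed χ z) = 1) ∧
    (∀ φ : ℝ → ℝ, ContDiff ℝ 2 φ → HasCompactSupport φ →
      (∫ z : ℝ, vinfPushed χ z * deriv (deriv φ) z)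
        + (∫ z : ℝ, betaPushed χ z * vinfPushed χ z * deriv φ z) = 0) := by
  have hχ0 : (0:ℝ) < χ := lt_trans one_pos hχ
  have hχne : χ ≠ 0 := hχ0.ne'
  have h1 : χ^2 - 1 > 0 := by nlinarith
  set c : ℝ := (χ^2 - 1)/χ^3 with hc
  set a : ℝ := χ - 1/χ with ha
  have ha0 : 0 < a := by
    rw [ha]
    have : 1/χ < 1 := by rw [div_lt_one hχ0]; exact hχ
    linarith
  refine ⟨?_, ?_, ?_⟩
  · -- Part 1: the drift identity away from 0
    intro z hz
    rcases lt_or_gt_of_ne hz with hz' | hz'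
    · have hev : uprofPushed χ =ᶠ[nhds z] (fun _ => χ) := by
        filter_upwards [Iio_mem_nhds hz'] with w hw
        simp [uprofPushed, not_lt.2 (le_of_lt (mem_Iio.1 hw))]
      have hder : deriv (uprofPushed χ) z = 0 := by
        rw [hev.deriv_eq]; simp
      have huz : uprofPushed χ z = χ := by simp [uprofPushed, not_lt.2 hz'.le]
      rw [hder, huz, betaPushed, if_pos hz']
      simp [if_pos hz']
    · have hev : uprofPushed χ =ᶠ[nhds z] (fun w => χ * Real.exp (-(χ * w))) := by
        filter_upwards [Ioi_mem_nhds hz'] with w hw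
        simp [uprofPushed, mem_Ioi.1 hw]
      have hd : HasDerivAt (fun w => χ * Real.exp (-(χ * w)))
          (χ * (Real.exp (-(χ * z)) * (-(χ * 1)))) z := by
        have hd1 : HasDerivAt (fun w : ℝ => -(χ * w)) (-(χ * 1)) z :=
          ((hasDerivAt_id z).const_mul χ).neg
        simpa [Function.comp] using ((Real.hasDerivAt_exp (-(χ * z))).comp z hd1).const_mul χ
      have hder : deriv (uprofPushed χ) z = χ * (Real.exp (-(χ * z)) * (-(χ * 1))) := by
        rw [hev.deriv_eq]; exact hd.deriv
      have huz : uprofPushed χ z = χ * Real.exp (-(χ * z)) := by simp [uprofPushed, hz']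
      rw [hder, huz, betaPushed, if_neg (not_lt.2 hz'.le)]
      rw [if_neg (not_lt.2 hz'.le)]
      have he : Real.exp (-(χ * z)) ≠ 0 := Real.exp_ne_zero _
      field_simp
      ring
  · -- Part 2: normalization
    set v : ℝ → ℝ :=
      fun z => (if z ≤ 0 then c * Real.exp (z/χ) else c * Real.exp (-a * z)) with hv
    have hintL : IntegrableOn v (Iic 0) := by
      refine IntegrableOn.congr_fun (f := fun z => c * Real.exp ((1/χ)*z))
        ((expIic_integrable (by positivity) 0).const_mul c) ?_ measurableSet_Iic
      intro z hz
      simp only [hv, if_pos (mem_Iic.1 hz)]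
      rw [one_div, inv_mul_eq_div]
    have hintR : IntegrableOn v (Ioi 0) := by
      refine IntegrableOn.congr_fun (f := fun z => c * Real.exp (-a * z))
        ((exp_neg_integrableOn_Ioi 0 ha0).const_mul c) ?_ measurableSet_Ioi
      intro z hz
      simp only [hv, if_neg (not_le.2 (mem_Ioi.1 hz))]
    have hL : (∫ z in Iic 0, v z) = c * χ := by
      have hfc : Continuous (fun z : ℝ => χ * c * Real.exp (z/χ)) := by fun_prop
      have key := integral_Iic_of_hasDerivAt_of_tendsto
        (f := fun z => χ * c * Real.exp (z/χ)) (f' := v) (a := 0) (m := 0)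
        hfc.continuousWithinAt ?_ hintL ?_
      · rw [key]; simp; ring
      · intro x hx
        have hd1 : HasDerivAt (fun z : ℝ => z/χ) (1/χ) x := by
          simpa using (hasDerivAt_id x).div_const χ
        have h2 : HasDerivAt (fun z : ℝ => χ * c * Real.exp (z/χ))
            (χ * c * (Real.exp (x/χ) * (1/χ))) x := by
          simpa [Function.comp] using ((Real.hasDerivAt_exp (x/χ)).comp x hd1).const_mul (χ * c)
        refine h2.congr_deriv ?_
        simp only [hv, if_pos (mem_Iio.1 hx).le]
        field_simp
      · have h3 : Tendsto (fun z : ℝ => z/χ) atBot atBot := tendsto_id.atBot_div_const hχ0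
        have := Real.tendsto_exp_atBot.comp h3
        simpa using (this.const_mul (χ * c))
    have hR : (∫ z in Ioi 0, v z) = c / a := by
      have hfc : Continuous (fun z : ℝ => -(c/a) * Real.exp (-a * z)) := by fun_prop
      have key := integral_Ioi_of_hasDerivAt_of_tendsto
        (f := fun z => -(c/a) * Real.exp (-a * z)) (f' := v) (a := 0) (m := 0)
        hfc.continuousWithinAt ?_ hintR ?_
      · rw [key]; simp
      · intro x hx
        have hd1 : HasDerivAt (fun z : ℝ => -a * z) (-a) x := by
          simpa using (hasDerivAt_id x).const_mul (-a)
        have h2 : HasDerivAt (fun z : ℝ => -(c/a) * Real.exp (-a * z))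
            (-(c/a) * (Real.exp (-a * x) * (-a))) x := by
          simpa [Function.comp] using ((Real.hasDerivAt_exp (-a * x)).comp x hd1).const_mul (-(c/a))
        refine h2.congr_deriv ?_
        simp only [hv, if_neg (not_le.2 (mem_Ioi.1 hx))]
        field_simp
      · have h3 : Tendsto (fun z : ℝ => -a * z) atTop atBot :=
          tendsto_id.const_mul_atTop_of_neg (neg_neg_iff_pos.2 ha0)
        have := Real.tendsto_exp_atBot.comp h3
        simpa using (this.const_mul (-(c/a)))
    have hsplit := intervalIntegral.integral_Iic_add_Ioi hintL hintR
    have hgoal : (∫ z : ℝ, v z) = c * χ + c / a := by rw [← hsplit, hL, hR]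
    have hfin : c * χ + c / a = 1 := by
      rw [hc, ha]
      have h2 : χ - 1/χ ≠ 0 := ne_of_gt ha0
      have hne : χ^2 - 1 ≠ 0 := ne_of_gt h1
      rw [div_div]
      have h3 : χ^3 * (χ - 1/χ) = χ^2 * (χ^2 - 1) := by field_simp
      rw [h3]
      field_simp
      ring
    show (∫ z : ℝ, v z) = 1
    rw [hgoal, hfin]
  · -- Part 3: weak stationarity
    intro φ hφ hφs
    have hφ1 : ContDiff ℝ 1 (deriv φ) := by
      have h2 : ContDiff ℝ ((1:ℕ) + 1) φ := by exact_mod_cast hφ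
      exact (contDiff_succ_iff_deriv.1 h2).2.2
    have hφ'diff : Differentiable ℝ (deriv φ) := hφ1.differentiable one_ne_zero
    have hφ'cont : Continuous (deriv φ) := hφ'diff.continuous
    have hφ''cont : Continuous (deriv (deriv φ)) := by
      have hh1 : ContDiff ℝ ((0:ℕ) + 1) (deriv φ) := by exact_mod_cast hφ1
      exact ((contDiff_succ_iff_deriv.1 hh1).2.2).continuous
    have hsφ' : HasCompactSupport (deriv φ) := hφs.deriv
    have hsφ'' : HasCompactSupport (deriv (deriv φ)) := hsφ'.deriv
    have hvcont : Continuous (vinfPushed χ) := by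
      unfold vinfPushed
      apply Continuous.if_le
      · fun_prop
      · fun_prop
      · exact continuous_id
      · exact continuous_const
      · intro x hx; rw [hx]; norm_num
    have Int1 : Integrable (fun z => vinfPushed χ z * deriv (deriv φ) z) :=
      (hvcont.mul hφ''cont).integrable_of_hasCompactSupport (hsφ''.mul_left)
    have hg : Integrable (fun z => vinfPushed χ z * deriv φ z) :=
      (hvcont.mul hφ'cont).integrable_of_hasCompactSupport (hsφ'.mul_left)
    have Int2 : Integrable (fun z => betaPushed χ z * vinfPushed χ z * deriv φ z) := by
      have heq : (fun z => betaPushed χ z * vinfPushed χ z * deriv φ z)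
          = fun z => (1/χ - χ) * (vinfPushed χ z * deriv φ z)
            + χ * (Iio 0).indicator (fun w => vinfPushed χ w * deriv φ w) z := by
        funext z
        by_cases h : z < 0 <;> simp [betaPushed, indicator, h] <;> ring
      rw [heq]
      exact (hg.const_mul _).add ((hg.indicator measurableSet_Iio).const_mul _)
    set F : ℝ → ℝ := fun z => vinfPushed χ z * deriv (deriv φ) z
      + betaPushed χ z * vinfPushed χ z * deriv φ z with hF
    have IntF : Integrable F := Int1.add Int2
    have hIic : (∫ z in Iic 0, F z) = c * deriv φ 0 := by
      have hfc : Continuous (fun z : ℝ => c * Real.exp (z/χ) * deriv φ z) :=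
        ((continuous_const.mul
          (Real.continuous_exp.comp (continuous_id.div_const χ))).mul hφ'cont)
      have key := integral_Iic_of_hasDerivAt_of_tendsto
        (f := fun z => c * Real.exp (z/χ) * deriv φ z) (f' := F) (a := 0) (m := 0)
        hfc.continuousWithinAt ?_ IntF.integrableOn ?_
      · rw [key]; simp
      · intro x hx
        have hd1 : HasDerivAt (fun z : ℝ => c * Real.exp (z/χ))
            (c * Real.exp (x/χ) * (1/χ)) x := by
          have hh1 : HasDerivAt (fun z : ℝ => z/χ) (1/χ) x := by
            simpa using (hasDerivAt_id x).div_const χ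
          have := ((Real.hasDerivAt_exp (x/χ)).comp x hh1).const_mul c
          simpa [Function.comp, mul_assoc] using this
        have hd2 : HasDerivAt (deriv φ) (deriv (deriv φ) x) x := (hφ'diff x).hasDerivAt
        have := hd1.mul hd2
        refine this.congr_deriv ?_
        have hx0 : x < 0 := mem_Iio.1 hx
        simp only [hF, vinfPushed, betaPushed, if_pos hx0, if_pos hx0.le]
        ring
      · have hz : ∀ᶠ z in atBot, deriv φ z = 0 := compactSupport_eventually_atBot hsφ'
        have hEE : (fun z => c * Real.exp (z/χ) * deriv φ z) =ᶠ[atBot] (fun _ => 0) := by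
          filter_upwards [hz] with z hz; rw [hz, mul_zero]
        exact Tendsto.congr' hEE.symm tendsto_const_nhds
    have hIoi : (∫ z in Ioi 0, F z) = -(c * deriv φ 0) := by
      have hfc : Continuous (fun z : ℝ => c * Real.exp (-a * z) * deriv φ z) :=
        ((continuous_const.mul
          (Real.continuous_exp.comp ((continuous_const.mul continuous_id)))).mul hφ'cont)
      have key := integral_Ioi_of_hasDerivAt_of_tendsto
        (f := fun z => c * Real.exp (-a * z) * deriv φ z) (f' := F) (a := 0) (m := 0)
        hfc.continuousWithinAt ?_ IntF.integrableOn ?_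
      · rw [key]; simp
      · intro x hx
        have hd1 : HasDerivAt (fun z : ℝ => c * Real.exp (-a * z))
            (c * Real.exp (-a * x) * (-a)) x := by
          have hh1 : HasDerivAt (fun z : ℝ => -a * z) (-a) x := by
            simpa using (hasDerivAt_id x).const_mul (-a)
          have := ((Real.hasDerivAt_exp (-a * x)).comp x hh1).const_mul c
          simpa [Function.comp, mul_assoc] using this
        have hd2 : HasDerivAt (deriv φ) (deriv (deriv φ) x) x := (hφ'diff x).hasDerivAt
        have := hd1.mul hd2
        refine this.congr_deriv ?_
        have hx0 : 0 < x := mem_Ioi.1 hx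
        simp only [hF, vinfPushed, betaPushed, if_neg (not_lt.2 hx0.le),
          if_neg (not_le.2 hx0), ← ha]
        rw [show (1/χ - χ : ℝ) = -a by rw [ha]; ring]
        ring
      · have hz : ∀ᶠ z in atTop, deriv φ z = 0 := compactSupport_eventually_atTop hsφ'
        have hEE : (fun z => c * Real.exp (-a * z) * deriv φ z) =ᶠ[atTop] (fun _ => 0) := by
          filter_upwards [hz] with z hz; rw [hz, mul_zero]
        exact Tendsto.congr' hEE.symm tendsto_const_nhds
    have hsplit := intervalIntegral.integral_Iic_add_Ioi (b := (0:ℝ))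
      IntF.integrableOn IntF.integrableOn
    calc (∫ z : ℝ, vinfPushed χ z * deriv (deriv φ) z)
          + (∫ z : ℝ, betaPushed χ z * vinfPushed χ z * deriv φ z)
        = ∫ z : ℝ, F z := (integral_add Int1 Int2).symm
      _ = (∫ z in Iic 0, F z) + (∫ z in Ioi 0, F z) := hsplit.symm
      _ = 0 := by rw [hIic, hIoi]; ring
end
end
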